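/- arXiv:0704.3911 — 2 statements merged into one kernel-verified Lean document; each statement's English description precedes it below -/
import Mathlib

section
/- Let K be a nontrivial compact metrizable group and let Γ be a group of continuous automorphisms of K. Then the following are equivalent: (1) Γ acts distally on K; (2) for every nontrivial closed Γ-invariant subgroup L of K, the action of Γ on L is not ergodic. -/
open MeasureTheory Topology TopologicalSpace
open scoped UniformConvergence Pointwise
/-- The normalized Haar measure on a compact topological group,
taken with respect to the Borel σ-algebra. -/
noncomputable def haarB (K : Type*) [Group K] [TopologicalSpace K] [IsTopologicalGroup K]
    [CompactSpace K] : @Measure K (borel K) :=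
  letI : MeasurableSpace K := borel K
  haveI : BorelSpace K := ⟨rfl⟩
  Measure.haarMeasure ⊤

/-- A set `S` of transformations of a compact group `K` acts *ergodically* if every Borel
subset invariant under all elements of `S` is null or co-null for the normalized Haar measure. -/
def IsErgodicAction {K : Type*} [Group K] [TopologicalSpace K] [IsTopologicalGroup K]
    [CompactSpace K] (S : Set (K → K)) : Prop :=
  ∀ A : Set K, MeasurableSet[borel K] A → (∀ f ∈ S, f '' A = A) →
    haarB K A = 0 ∨ haarB K A = 1

/-- A single transformation of a compact group is *ergodic* if every Borel subset it leaves
invariant is null or co-null for the normalized Haar measure. -/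
def IsErgodicMap {K : Type*} [Group K] [TopologicalSpace K] [IsTopologicalGroup K]
    [CompactSpace K] (f : K → K) : Prop :=
  ∀ A : Set K, MeasurableSet[borel K] A → f '' A = A → haarB K A = 0 ∨ haarB K A = 1

/-- A set `S` of transformations of a topological group acts *distally* if for every `x ≠ 1`
the identity is not in the closure of the orbit of `x`. -/
def IsDistalAction {K : Type*} [Group K] [TopologicalSpace K] (S : Set (K → K)) : Prop :=
  ∀ x : K, x ≠ 1 → (1 : K) ∉ closure {y : K | ∃ f ∈ S, f x = y}

/-- The set of maps on `K` determined by a subgroup `Γ` of the automorphism group of `K`. -/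
def Subgroup.autMaps {K : Type*} [Group K] (Γ : Subgroup (MulAut K)) : Set (K → K) :=
  {f : K → K | ∃ α ∈ Γ, ⇑α = f}

/-- The set of maps on `K` determined by the cyclic group generated by an automorphism `α`. -/
def MulAut.cycMaps {K : Type*} [Group K] (α : MulAut K) : Set (K → K) :=
  {f : K → K | ∃ n : ℤ, ⇑(α ^ n) = f}

open Set
open scoped symmDiff ENNReal
set_option linter.unusedSectionVars false

noncomputable def myHaar (G : Type*) [Group G] [TopologicalSpace G] [IsTopologicalGroup G]
    [CompactSpace G] [MeasurableSpace G] [BorelSpace G] : Measure G :=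
  Measure.haarMeasure ⊤

section Aux
variable {G : Type*} [Group G] [TopologicalSpace G] [IsTopologicalGroup G]
  [CompactSpace G] [MetrizableSpace G] [MeasurableSpace G] [BorelSpace G]

lemma myHaar_prob : IsProbabilityMeasure (myHaar G) := by
  constructor
  rw [myHaar, ← PositiveCompacts.coe_top (α := G)]
  exact Measure.haarMeasure_self

instance : LocallyCompactSpace G := (⊤ : PositiveCompacts G).locallyCompactSpace_of_group

lemma myHaar_sf : SigmaFinite (myHaar G) := by rw [myHaar]; infer_instance
lemma myHaar_reg : (myHaar G).Regular := by rw [myHaar]; infer_instance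
lemma myHaar_inv : (myHaar G).IsMulLeftInvariant := by rw [myHaar]; infer_instance

lemma myHaar_unique (ν : Measure G) [IsFiniteMeasure ν] [ν.IsMulLeftInvariant] :
    ν = ν Set.univ • myHaar G := by
  have := Measure.haarMeasure_unique ν (⊤ : PositiveCompacts G)
  rwa [PositiveCompacts.coe_top] at this

lemma myHaar_map (e : G ≃* G) (he : Continuous e) :
    Measure.map e (myHaar G) = myHaar G := by
  haveI hp : IsProbabilityMeasure (myHaar G) := myHaar_prob
  haveI : SigmaFinite (myHaar G) := myHaar_sf
  haveI : (myHaar G).IsMulLeftInvariant := myHaar_inv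
  have hme : Measurable e := he.measurable
  haveI : IsProbabilityMeasure (Measure.map e (myHaar G)) :=
    Measure.isProbabilityMeasure_map hme.aemeasurable
  haveI : (Measure.map e (myHaar G)).IsMulLeftInvariant := by
    constructor
    intro g
    have h1 : (fun x => g * x) ∘ e = e ∘ (fun x => e.symm g * x) := by
      ext x; simp
    rw [Measure.map_map (measurable_const_mul g) hme, h1,
      ← Measure.map_map hme (measurable_const_mul (e.symm g)),
      MeasureTheory.map_mul_left_eq_self]
  have := myHaar_unique (Measure.map e (myHaar G))
  simpa using this

/-- image of a measurable set under a continuous automorphism has the same haar measure.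
    (we require continuity of the inverse as well, to transfer) -/
lemma myHaar_image (e : G ≃* G) (he : Continuous e) (he' : Continuous e.symm)
    {A : Set G} (hA : MeasurableSet A) : myHaar G (e '' A) = myHaar G A := by
  have h1 : e '' A = e.symm ⁻¹' A := by
    ext z; constructor
    · rintro ⟨a, ha, rfl⟩; simpa using ha
    · intro hz; exact ⟨e.symm z, hz, by simp⟩
  rw [h1, ← Measure.map_apply he'.measurable hA, myHaar_map e.symm he']

lemma myHaar_smul (y : G) {A : Set G} : myHaar G (y • A) = myHaar G A := by
  haveI : (myHaar G).IsMulLeftInvariant := myHaar_inv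
  exact measure_smul (μ := myHaar G) y A


lemma myHaar_cont_one {A : Set G} (hA : MeasurableSet A) {ε : ℝ≥0∞} (hε : ε ≠ 0) :
    ∀ᶠ g in 𝓝 (1 : G), myHaar G ((g • A) ∆ A) < ε := by
  haveI : IsProbabilityMeasure (myHaar G) := myHaar_prob
  haveI : (myHaar G).Regular := myHaar_reg
  set μ := myHaar G with hμ
  set δ := min ε 1 / 4 with hδ
  have hδ0 : δ ≠ 0 := by
    rw [hδ]
    simp only [ne_eq, ENNReal.div_eq_zero_iff, not_or]
    constructor
    · exact ne_of_gt (lt_min (pos_iff_ne_zero.mpr hε) one_pos)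
    · norm_num
  have hδε : δ + δ + (δ + δ) ≤ ε := by
    calc δ + δ + (δ + δ) = 4 * (min ε 1 / 4) := by rw [hδ]; ring
    _ ≤ min ε 1 := ENNReal.mul_div_le
    _ ≤ ε := min_le_left _ _
  obtain ⟨k, hkA, hkco, hkcl, hkd⟩ :=
    hA.exists_isCompact_isClosed_diff_lt (measure_ne_top μ A) hδ0
  have h1 : ∀ᶠ g in 𝓝 (1 : G), μ (g • k \ k) < δ :=
    eventually_nhds_one_measure_smul_diff_lt hkco hkcl hδ0
  have h2 : ∀ᶠ g in 𝓝 (1 : G), μ (g⁻¹ • k \ k) < δ :=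
    (continuous_inv.tendsto' (1 : G) 1 inv_one).eventually h1
  filter_upwards [h1, h2] with g hg1 hg2
  have key : ∀ h : G, μ (h • k \ k) < δ → μ (h • A \ A) < δ + δ := by
    intro h hh
    have e1 : μ (h • A \ A) ≤ μ (h • A \ h • k) + μ (h • k \ A) := by
      refine (measure_mono ?_).trans (measure_union_le _ _)
      intro z hz
      by_cases hzk : z ∈ h • k
      · exact Or.inr ⟨hzk, hz.2⟩
      · exact Or.inl ⟨hz.1, hzk⟩
    have e2 : μ (h • A \ h • k) = μ (A \ k) := by
      rw [← Set.smul_set_sdiff, myHaar_smul]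
    have e3 : μ (h • k \ A) ≤ μ (h • k \ k) := by
      apply measure_mono
      exact Set.diff_subset_diff_right hkA
    calc μ (h • A \ A) ≤ μ (A \ k) + μ (h • k \ k) := by
          rw [← e2]; exact e1.trans (by gcongr)
    _ < δ + δ := by exact ENNReal.add_lt_add hkd hh
  have hga : μ (g • A \ A) < δ + δ := key g hg1
  have hgb : μ (A \ g • A) < δ + δ := by
    have : A \ g • A = g • (g⁻¹ • A \ A) := by
      rw [Set.smul_set_sdiff, smul_inv_smul]
    rw [this, myHaar_smul]
    exact key g⁻¹ hg2
  calc μ ((g • A) ∆ A) ≤ μ (g • A \ A) + μ (A \ g • A) := by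
        rw [Set.symmDiff_def]; exact measure_union_le _ _
  _ < (δ + δ) + (δ + δ) := ENNReal.add_lt_add hga hgb
  _ ≤ ε := hδε


lemma meas_smul_set {y : G} {A : Set G} (hA : MeasurableSet A) : MeasurableSet (y • A) := by
  rw [show y • A = (fun z => y⁻¹ * z) ⁻¹' A from
    Set.ext fun z => by simp [Set.mem_smul_set_iff_inv_smul_mem]]
  exact measurable_const_mul y⁻¹ hA

lemma meas_tri (μ : Measure G) (s t u : Set G) : μ (s ∆ u) ≤ μ (s ∆ t) + μ (t ∆ u) :=
  (measure_mono (symmDiff_triangle s t u)).trans (measure_union_le _ _)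

lemma myHaar_smul_symmDiff_image (e : G ≃* G) (he : Continuous e) (he' : Continuous e.symm)
    {A : Set G} (hA : MeasurableSet A) (hAe : e '' A = A) (y : G) :
    myHaar G ((e y • A) ∆ A) = myHaar G ((y • A) ∆ A) := by
  have h1 : e y • A = e '' (y • A) := by
    conv_lhs => rw [← hAe]
    rw [Set.image_smul_distrib]
  have h2 : e '' ((y • A) ∆ A) = (e y • A) ∆ A := by
    rw [Set.image_symmDiff e.injective, ← h1, hAe]
  rw [← h2, myHaar_image e he he' ((meas_smul_set hA).symmDiff hA)]

lemma myHaar_zero_or_one {A : Set G} (hA : MeasurableSet A)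
    (h : ∀ y : G, myHaar G ((y • A) ∆ A) = 0) : myHaar G A = 0 ∨ myHaar G A = 1 := by
  haveI : IsProbabilityMeasure (myHaar G) := myHaar_prob
  set μ := myHaar G with hμdef
  have key : ∀ (y : G) (s : Set G), MeasurableSet s → μ (s ∩ y • A) = μ (s ∩ A) := by
    intro y s hs
    have d1 : μ (y • A \ A) = 0 :=
      le_antisymm ((measure_mono (by rw [Set.symmDiff_def]; exact Set.subset_union_left)).trans
        (h y).le) zero_le
    have d2 : μ (A \ y • A) = 0 :=
      le_antisymm ((measure_mono (by rw [Set.symmDiff_def]; exact Set.subset_union_right)).trans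
        (h y).le) zero_le
    apply le_antisymm
    · calc μ (s ∩ y • A) ≤ μ ((s ∩ A) ∪ (y • A \ A)) := by
            apply measure_mono; intro z hz
            by_cases hzA : z ∈ A
            · exact Or.inl ⟨hz.1, hzA⟩
            · exact Or.inr ⟨hz.2, hzA⟩
      _ ≤ μ (s ∩ A) + μ (y • A \ A) := measure_union_le _ _
      _ = μ (s ∩ A) := by rw [d1, add_zero]
    · calc μ (s ∩ A) ≤ μ ((s ∩ y • A) ∪ (A \ y • A)) := by
            apply measure_mono; intro z hz
            by_cases hzA : z ∈ y • A
            · exact Or.inl ⟨hz.1, hzA⟩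
            · exact Or.inr ⟨hz.2, hzA⟩
      _ ≤ μ (s ∩ y • A) + μ (A \ y • A) := measure_union_le _ _
      _ = μ (s ∩ y • A) := by rw [d2, add_zero]
  set ν := μ.restrict A with hν
  haveI : IsFiniteMeasure ν := by
    rw [hν]; infer_instance
  haveI : ν.IsMulLeftInvariant := by
    constructor
    intro g
    ext s hs
    rw [Measure.map_apply (measurable_const_mul g) hs,
      Measure.restrict_apply (measurable_const_mul g hs), Measure.restrict_apply hs]
    have h3 : (fun x => g * x) ⁻¹' s ∩ A = g⁻¹ • (s ∩ g • A) := by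
      rw [Set.smul_set_inter]
      congr 1
      · ext z; simp [Set.mem_smul_set_iff_inv_smul_mem]
      · exact (inv_smul_smul g A).symm
    rw [h3, myHaar_smul, key g s hs]
  have huniq := myHaar_unique ν
  have hAc : ν Aᶜ = 0 := by
    rw [hν, Measure.restrict_apply hA.compl]
    simp
  rw [huniq] at hAc
  have hνuniv : ν Set.univ = μ A := by rw [hν, Measure.restrict_apply_univ]
  rw [hνuniv] at hAc
  simp only [Measure.smul_apply, smul_eq_mul] at hAc
  rcases mul_eq_zero.mp hAc with h0 | h1
  · exact Or.inl h0
  · right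
    have hcompl : μ Aᶜ = 1 - μ A := prob_compl_eq_one_sub hA
    rw [← hμdef] at h1
    rw [hcompl] at h1
    have : (1 : ENNReal) ≤ μ A := by
      rwa [tsub_eq_zero_iff_le] at h1
    exact le_antisymm prob_le_one this


lemma myHaar_pos : (myHaar G).IsOpenPosMeasure := by
  rw [myHaar]; infer_instance

end Aux


section Restrict
variable {K : Type*} [Group K]

/-- Restriction of an automorphism to an invariant subgroup, as a `MulEquiv`. -/
def restrictEquiv (Γ : Subgroup (MulAut K)) (L : Subgroup K)
    (hinv : ∀ α ∈ Γ, ∀ y ∈ L, α y ∈ L) (α : MulAut K) (hα : α ∈ Γ) : ↥L ≃* ↥L where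
  toFun := fun y => ⟨α ↑y, hinv α hα ↑y y.2⟩
  invFun := fun y => ⟨α⁻¹ ↑y, hinv α⁻¹ (inv_mem hα) ↑y y.2⟩
  left_inv := fun y => Subtype.ext (by simp [MulAut.inv_def])
  right_inv := fun y => Subtype.ext (by simp [MulAut.inv_def])
  map_mul' := fun y z => Subtype.ext (map_mul α ↑y ↑z)

lemma restrictEquiv_symm (Γ : Subgroup (MulAut K)) (L : Subgroup K)
    (hinv : ∀ α ∈ Γ, ∀ y ∈ L, α y ∈ L) (α : MulAut K) (hα : α ∈ Γ) :
    ⇑(restrictEquiv Γ L hinv α hα).symm = ⇑(restrictEquiv Γ L hinv α⁻¹ (inv_mem hα)) := rfl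

lemma restrictEquiv_continuous [TopologicalSpace K] (Γ : Subgroup (MulAut K)) (L : Subgroup K)
    (hinv : ∀ α ∈ Γ, ∀ y ∈ L, α y ∈ L) (α : MulAut K) (hα : α ∈ Γ)
    (hc : Continuous ⇑α) : Continuous ⇑(restrictEquiv Γ L hinv α hα) :=
  (hc.comp continuous_subtype_val).subtype_mk _

end Restrict

/-- Let `K` be a nontrivial compact metrizable group and `Γ` a group of
continuous automorphisms of `K`.  Then `Γ` acts distally on `K` if and only if for every
nontrivial closed `Γ`-invariant subgroup `L` of `K` the action of `Γ` on `L` is not ergodic. -/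
theorem stmt0 {K : Type*} [Group K] [TopologicalSpace K] [IsTopologicalGroup K]
    [CompactSpace K] [MetrizableSpace K] [Nontrivial K]
    (Γ : Subgroup (MulAut K)) (hcont : ∀ α ∈ Γ, Continuous ⇑α) :
    IsDistalAction Γ.autMaps ↔
      ∀ (L : Subgroup K) (hL : IsClosed (L : Set K)), L ≠ ⊥ →
        (∀ α ∈ Γ, ∀ x ∈ L, α x ∈ L) →
        haveI : CompactSpace L := isCompact_iff_compactSpace.mp (hL.isCompact)
        ¬ IsErgodicAction {g : L → L | ∃ α ∈ Γ, ∀ x : L, (g x : K) = α (x : K)} := by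
  constructor
  · -- distal implies: no nontrivial closed invariant subgroup is ergodic
    intro hdist L hL hbot hinv
    haveI : CompactSpace ↥L := isCompact_iff_compactSpace.mp hL.isCompact
    haveI : MetrizableSpace ↥L := IsEmbedding.subtypeVal.metrizableSpace
    intro herg
    letI : MeasurableSpace ↥L := borel ↥L
    haveI : BorelSpace ↥L := ⟨rfl⟩
    set μ := myHaar ↥L with hμdef
    haveI : IsProbabilityMeasure μ := myHaar_prob
    haveI : μ.IsOpenPosMeasure := myHaar_pos
    haveI : μ.IsMulLeftInvariant := myHaar_inv
    have hBB : haarB ↥L = μ := rfl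
    set rE := restrictEquiv Γ L hinv with hrE
    obtain ⟨U, hU⟩ := (𝓝 (1 : ↥L)).exists_antitone_basis
    set V : ℕ → Set ↥L := fun n =>
      ⋃ (α : MulAut K) (hα : α ∈ Γ), (rE α hα) ⁻¹' interior (U n) with hV
    have hVopen : ∀ n, IsOpen (V n) := fun n =>
      isOpen_iUnion fun α => isOpen_iUnion fun hα =>
        isOpen_interior.preimage (restrictEquiv_continuous Γ L hinv α hα (hcont α hα))
    have hVmem : ∀ n (y : ↥L), y ∈ V n ↔ ∃ α, ∃ hα : α ∈ Γ, rE α hα y ∈ interior (U n) := by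
      intro n y
      simp [hV, Set.mem_iUnion]
    have hVinv : ∀ n, ∀ f ∈ {g : ↥L → ↥L | ∃ α ∈ Γ, ∀ x : ↥L, (g x : K) = α (x : K)},
        f '' V n = V n := by
      intro n f hf
      obtain ⟨α₀, hα₀, hf0⟩ := hf
      have hfeq : f = ⇑(rE α₀ hα₀) := funext fun y => Subtype.ext (hf0 y)
      apply Set.Subset.antisymm
      · rintro z ⟨y, hy, rfl⟩
        obtain ⟨α, hα, hmemU⟩ := (hVmem n y).1 hy
        refine (hVmem n (f y)).2 ⟨α * α₀⁻¹, mul_mem hα (inv_mem hα₀), ?_⟩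
        have heq : rE (α * α₀⁻¹) (mul_mem hα (inv_mem hα₀)) (f y) = rE α hα y := by
          apply Subtype.ext
          rw [hfeq]
          show (α * α₀⁻¹) ((α₀ : MulAut K) ↑y) = α ↑y
          rw [MulAut.mul_apply, MulAut.inv_def, MulEquiv.symm_apply_apply]
        rw [heq]; exact hmemU
      · intro y hy
        obtain ⟨α, hα, hmemU⟩ := (hVmem n y).1 hy
        refine ⟨rE α₀⁻¹ (inv_mem hα₀) y, ?_, ?_⟩
        · refine (hVmem n _).2 ⟨α * α₀, mul_mem hα hα₀, ?_⟩
          have heq : rE (α * α₀) (mul_mem hα hα₀) (rE α₀⁻¹ (inv_mem hα₀) y) = rE α hα y := by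
            apply Subtype.ext
            show (α * α₀) ((α₀⁻¹ : MulAut K) ↑y) = α ↑y
            rw [MulAut.mul_apply, MulAut.inv_def, MulEquiv.apply_symm_apply]
          rw [heq]; exact hmemU
        · rw [hfeq]
          apply Subtype.ext
          show (α₀ : MulAut K) ((α₀⁻¹ : MulAut K) ↑y) = ↑y
          rw [MulAut.inv_def, MulEquiv.apply_symm_apply]
    have hV1 : ∀ n, μ (V n) = 1 := by
      intro n
      have h1mem : (1 : ↥L) ∈ V n := by
        refine (hVmem n 1).2 ⟨1, one_mem Γ, ?_⟩
        have h1 : rE 1 (one_mem Γ) 1 = 1 := Subtype.ext rfl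
        rw [h1]
        exact mem_interior_iff_mem_nhds.mpr (hU.toHasBasis.mem_of_mem trivial)
      have hd := herg (V n) (hVopen n).measurableSet (hVinv n)
      rw [hBB] at hd
      rcases hd with h0 | h1
      · exact absurd h0 ((hVopen n).measure_ne_zero μ ⟨1, h1mem⟩)
      · exact h1
    set D := ⋂ n, V n with hD
    have hDmeas : MeasurableSet D := MeasurableSet.iInter fun n => (hVopen n).measurableSet
    have hD1 : μ D = 1 := by
      rw [← prob_compl_eq_zero_iff hDmeas]
      have hDc : Dᶜ = ⋃ n, (V n)ᶜ := by rw [hD, Set.compl_iInter]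
      rw [hDc]
      refine measure_iUnion_null fun n => ?_
      rw [prob_compl_eq_zero_iff (hVopen n).measurableSet]
      exact hV1 n
    obtain ⟨z, hz1⟩ := Subgroup.ne_bot_iff_exists_ne_one.mp hbot
    have hone : μ {(1 : ↥L)} ≠ 1 := by
      intro h1
      have hzz : μ {z} = μ {(1 : ↥L)} := by
        have hzs : ({z} : Set ↥L) = z • ({(1 : ↥L)} : Set ↥L) := by
          simp [Set.smul_set_singleton]
        rw [hzs, myHaar_smul]
      have hdisj : Disjoint ({(1 : ↥L)} : Set ↥L) ({z} : Set ↥L) := by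
        simp [Set.disjoint_singleton, hz1.symm]
      have hun := measure_union (μ := μ) hdisj (measurableSet_singleton z)
      have hle : μ ({(1 : ↥L)} ∪ {z}) ≤ 1 := prob_le_one
      rw [hun, hzz, h1] at hle
      norm_num at hle
    obtain ⟨x, hxD, hx1⟩ : ∃ x, x ∈ D ∧ x ≠ (1 : ↥L) := by
      by_contra hcon
      push_neg at hcon
      have hsub : D ⊆ {(1 : ↥L)} := fun y hy => hcon y hy
      have hge : 1 ≤ μ {(1 : ↥L)} := hD1 ▸ measure_mono hsub
      exact hone (le_antisymm prob_le_one hge)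
    have hclos : (1 : K) ∈ closure {y : K | ∃ f ∈ Γ.autMaps, f ↑x = y} := by
      rw [mem_closure_iff]
      intro o ho h1o
      have ht : (Subtype.val ⁻¹' o : Set ↥L) ∈ 𝓝 (1 : ↥L) := by
        refine (ho.preimage continuous_subtype_val).mem_nhds ?_
        simpa using h1o
      obtain ⟨n, -, hn⟩ := hU.toHasBasis.mem_iff.mp ht
      have hxV : x ∈ V n := Set.mem_iInter.mp hxD n
      obtain ⟨α, hα, hmemU⟩ := (hVmem n x).1 hxV
      exact ⟨α ↑x, hn (interior_subset hmemU), ⟨⇑α, ⟨α, hα, rfl⟩, rfl⟩⟩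
    exact hdist ↑x (by simpa using hx1) hclos
  · -- no ergodic nontrivial closed invariant subgroup implies distal
    intro hyp x hx1 hmem
    -- Zorn's lemma: a minimal closed invariant subgroup containing x
    set 𝒮 : Set (Set K) := {s | x ∈ s ∧ IsClosed s ∧ (∀ α ∈ Γ, ∀ y ∈ s, α y ∈ s) ∧
      ∃ L : Subgroup K, (L : Set K) = s} with h𝒮
    have huniv : Set.univ ∈ 𝒮 :=
      ⟨trivial, isClosed_univ, fun _ _ _ _ => trivial, ⟨⊤, rfl⟩⟩
    obtain ⟨m, -, hminS⟩ := zorn_superset_nonempty 𝒮 (by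
      intro c hc hchain hne
      refine ⟨⋂₀ c, ⟨fun s hs => (hc hs).1, isClosed_sInter fun s hs => (hc hs).2.1,
        fun α hα y hy s hs => (hc hs).2.2.1 α hα y (hy s hs), ?_⟩,
        fun s hs => Set.sInter_subset_of_mem hs⟩
      choose LL hLL using fun (s : c) => (hc s.2).2.2.2
      refine ⟨⨅ s : c, LL s, ?_⟩
      rw [Subgroup.coe_iInf, Set.sInter_eq_iInter]
      exact Set.iInter_congr fun s => hLL s) Set.univ huniv
    obtain ⟨hxm, hmcl, hminv, L, hLm⟩ := hminS.prop
    have hxL : x ∈ L := by rw [← SetLike.mem_coe, hLm]; exact hxm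
    have hLcl : IsClosed (L : Set K) := hLm ▸ hmcl
    have hLinv : ∀ α ∈ Γ, ∀ y ∈ L, α y ∈ L := by
      intro α hα y hy
      rw [← SetLike.mem_coe, hLm]
      exact hminv α hα y (by rw [← SetLike.mem_coe, hLm] at hy; exact hy)
    have hLbot : L ≠ ⊥ := by
      intro h
      rw [h] at hxL
      exact hx1 (Subgroup.mem_bot.mp hxL)
    haveI : CompactSpace ↥L := isCompact_iff_compactSpace.mp hLcl.isCompact
    haveI : MetrizableSpace ↥L := IsEmbedding.subtypeVal.metrizableSpace
    have herg := hyp L hLcl hLbot hLinv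
    letI : MeasurableSpace ↥L := borel ↥L
    haveI : BorelSpace ↥L := ⟨rfl⟩
    set μ := myHaar ↥L with hμdef
    haveI : IsProbabilityMeasure μ := myHaar_prob
    have hBB : haarB ↥L = μ := rfl
    unfold IsErgodicAction at herg
    push_neg at herg
    obtain ⟨A, hA, hAinv, hA01⟩ := herg
    rw [hBB] at hA01
    obtain ⟨hA0, hA1⟩ := hA01
    set rE := restrictEquiv Γ L hLinv with hrE
    have hrEcont : ∀ α (hα : α ∈ Γ), Continuous ⇑(rE α hα) :=
      fun α hα => restrictEquiv_continuous Γ L hLinv α hα (hcont α hα)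
    have hrEcont' : ∀ α (hα : α ∈ Γ), Continuous ⇑(rE α hα).symm := by
      intro α hα
      rw [hrE, restrictEquiv_symm]
      exact restrictEquiv_continuous Γ L hLinv α⁻¹ (inv_mem hα) (hcont α⁻¹ (inv_mem hα))
    have hAe : ∀ α (hα : α ∈ Γ), ⇑(rE α hα) '' A = A := fun α hα =>
      hAinv ⇑(rE α hα) ⟨α, hα, fun y => rfl⟩
    -- the essential stabilizer of A
    set H : Set ↥L := {y : ↥L | μ ((y • A) ∆ A) = 0} with hH
    have hH1 : (1 : ↥L) ∈ H := by
      simp only [hH, Set.mem_setOf_eq, one_smul, symmDiff_self]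
      simp
    have hHmul : ∀ y z : ↥L, y ∈ H → z ∈ H → y * z ∈ H := by
      intro y z hy hz
      have tri := meas_tri μ ((y * z) • A) (y • A) A
      have h1 : μ (((y * z) • A) ∆ (y • A)) = 0 := by
        have hs : ((y * z) • A) ∆ (y • A) = y • ((z • A) ∆ A) := by
          rw [Set.smul_set_symmDiff, mul_smul]
        rw [hs, myHaar_smul]
        exact hz
      rw [h1, hy, add_zero] at tri
      exact le_antisymm tri zero_le
    have hHinv : ∀ y : ↥L, y ∈ H → y⁻¹ ∈ H := by
      intro y hy
      have hs : (y⁻¹ • A) ∆ A = y⁻¹ • (A ∆ (y • A)) := by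
        rw [Set.smul_set_symmDiff, inv_smul_smul]
      rw [hH, Set.mem_setOf_eq, hs, myHaar_smul, symmDiff_comm]
      exact hy
    have hHα : ∀ α (hα : α ∈ Γ), ∀ y ∈ H, rE α hα y ∈ H := by
      intro α hα y hy
      rw [hH, Set.mem_setOf_eq,
        myHaar_smul_symmDiff_image (rE α hα) (hrEcont α hα) (hrEcont' α hα) hA (hAe α hα) y]
      exact hy
    have hHcl : IsClosed H := by
      rw [← isOpen_compl_iff, isOpen_iff_mem_nhds]
      intro y hy
      have hc : μ ((y • A) ∆ A) ≠ 0 := hy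
      have hev : {g : ↥L | μ ((g • A) ∆ A) < μ ((y • A) ∆ A)} ∈ 𝓝 (1 : ↥L) :=
        myHaar_cont_one hA hc
      have hWnhds : y • {g : ↥L | μ ((g • A) ∆ A) < μ ((y • A) ∆ A)} ∈ 𝓝 y := by
        have hsm := (smul_mem_nhds_smul_iff (a := (1 : ↥L)) y).2 hev
        simpa using hsm
      filter_upwards [hWnhds] with w hw
      obtain ⟨g, hg, rfl⟩ := hw
      intro hwH
      have hwH' : μ (((y * g) • A) ∆ A) = 0 := hwH
      have hstep : μ ((y • A) ∆ ((y * g) • A)) = μ ((g • A) ∆ A) := by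
        have hs : (y • A) ∆ ((y * g) • A) = y • (A ∆ (g • A)) := by
          rw [Set.smul_set_symmDiff, mul_smul]
        rw [hs, myHaar_smul, symmDiff_comm]
      have tri := meas_tri μ (y • A) ((y * g) • A) A
      rw [hstep, hwH', add_zero] at tri
      exact absurd (lt_of_le_of_lt tri hg) (lt_irrefl _)
    have hHuniv : H ≠ Set.univ := by
      intro hHu
      refine absurd (myHaar_zero_or_one hA fun y => ?_) (by rw [← hμdef]; tauto)
      have : y ∈ H := hHu ▸ Set.mem_univ y
      exact this
    by_cases hxH : (⟨x, hxL⟩ : ↥L) ∈ H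
    · -- the stabilizer is a smaller closed invariant subgroup containing x: contradiction
      set HS : Subgroup ↥L :=
        { carrier := H
          mul_mem' := fun {a b} ha hb => hHmul a b ha hb
          one_mem' := hH1
          inv_mem' := fun {a} ha => hHinv a ha } with hHS
      set H' : Subgroup K := HS.map L.subtype with hH'
      have hH'coe : (H' : Set K) = Subtype.val '' H := by
        rw [hH', Subgroup.coe_map]
        rfl
      have hH'mem : (H' : Set K) ∈ 𝒮 := by
        refine ⟨?_, ?_, ?_, ⟨H', rfl⟩⟩
        · rw [hH'coe]
          exact ⟨⟨x, hxL⟩, hxH, rfl⟩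
        · rw [hH'coe]
          exact ((hHcl.isCompact).image continuous_subtype_val).isClosed
        · intro α hα y hy
          rw [hH'coe] at hy ⊢
          obtain ⟨w, hw, rfl⟩ := hy
          exact ⟨rE α hα w, hHα α hα w hw, rfl⟩
      have hsub : (H' : Set K) ⊆ m := by
        rw [hH'coe, ← hLm]
        rintro z ⟨w, hw, rfl⟩
        exact w.2
      have heq : (H' : Set K) = m := Set.Subset.antisymm hsub (hminS.2 hH'mem hsub)
      apply hHuniv
      apply Set.eq_univ_of_forall
      intro y
      have hym : (↑y : K) ∈ (H' : Set K) := by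
        rw [heq, ← hLm]
        exact y.2
      rw [hH'coe] at hym
      obtain ⟨w, hw, hwy⟩ := hym
      have : w = y := Subtype.ext hwy
      rwa [this] at hw
    · -- x is separated from 1 by the invariant function y ↦ μ ((y • A) ∆ A)
      have hc : μ (((⟨x, hxL⟩ : ↥L) • A) ∆ A) ≠ 0 := hxH
      set O : Set K := {y : K | ∃ f ∈ Γ.autMaps, f x = y} with hO
      have hOL : O ⊆ (L : Set K) := by
        rintro z ⟨f, ⟨α, hα, rfl⟩, rfl⟩
        exact hLinv α hα x hxL
      set O' : Set ↥L := Subtype.val ⁻¹' O with hO'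
      have h1O' : (1 : ↥L) ∈ closure O' := by
        have hval : Subtype.val '' O' = O := by
          rw [hO', Set.image_preimage_eq_inter_range, Subtype.range_coe]
          exact Set.inter_eq_self_of_subset_left hOL
        have hind := IsEmbedding.subtypeVal.toIsInducing.closure_eq_preimage_closure_image O'
        rw [hind, Set.mem_preimage, hval]
        simpa using hmem
      have horb : ∀ y ∈ O', μ ((y • A) ∆ A) = μ (((⟨x, hxL⟩ : ↥L) • A) ∆ A) := by
        intro y hy
        obtain ⟨f, ⟨α, hα, rfl⟩, hfx⟩ := hy
        have hyx : y = rE α hα ⟨x, hxL⟩ := Subtype.ext hfx.symm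
        rw [hyx,
          myHaar_smul_symmDiff_image (rE α hα) (hrEcont α hα) (hrEcont' α hα) hA (hAe α hα)]
      have hev : {g : ↥L | μ ((g • A) ∆ A) < μ (((⟨x, hxL⟩ : ↥L) • A) ∆ A)} ∈ 𝓝 (1 : ↥L) :=
        myHaar_cont_one hA hc
      obtain ⟨y, hyW, hyO⟩ := mem_closure_iff_nhds.mp h1O' _ hev
      have hy := horb y hyO
      rw [Set.mem_setOf_eq, hy] at hyW
      exact absurd hyW (lt_irrefl _)
end

section
/- Let Γ be a group of continuous automorphisms of a compact metrizable group K and α a continuous automorphism of K. Suppose Γ acts distally on K, α is distal on K, and αΓα⁻¹ = Γ. Then the group generated by Γ and α acts distally on K. -/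
open MeasureTheory Topology TopologicalSpace
open scoped UniformConvergence Pointwise

set_option linter.unusedSectionVars false


section Ellis
variable {M : Type*} [Group M] [TopologicalSpace M] [IsTopologicalGroup M]
  [CompactSpace M] [T2Space M]

/-- The orbit of `x` under integer powers of `a`. -/
def aOrbit (a : MulAut M) (x : M) : Set M := {y : M | ∃ n : ℤ, (a ^ n) x = y}

/-- The set of maps given by integer powers of `a`. -/
def aSet (a : MulAut M) : Set (M → M) := Set.range (fun n : ℤ => ⇑(a ^ n))

/-- The Ellis semigroup of `a` : the pointwise closure of the powers. -/
def aEllis (a : MulAut M) : Set (M → M) := closure (aSet a)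

lemma ha_inv_cont (a : MulAut M) (hac : Continuous ⇑a) : Continuous ⇑(a⁻¹) := by
  have h1 : Continuous ⇑(a.toEquiv) := hac
  let h := Continuous.homeoOfEquivCompactToT2 (f := a.toEquiv) h1
  have : ⇑(a⁻¹) = ⇑h.symm := by ext x; rfl
  rw [this]; exact h.symm.continuous

lemma ha_zpow_cont (a : MulAut M) (hac : Continuous ⇑a) : ∀ n : ℤ, Continuous ⇑(a ^ n) := by
  have hinv := ha_inv_cont a hac
  intro n
  induction n using Int.induction_on with
  | zero => simpa [zpow_zero] using continuous_id
  | succ k ih =>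
      have h1 : (a ^ ((k : ℤ) + 1)) = a ^ (k : ℤ) * a := by rw [zpow_add, zpow_one]
      rw [h1]
      exact ih.comp hac
  | pred k ih =>
      have h1 : (a ^ (-(k : ℤ) - 1)) = a ^ (-(k : ℤ)) * a⁻¹ := by
        rw [← zpow_neg_one, ← zpow_add]; ring_nf
      rw [h1]
      exact ih.comp hinv

lemma aSet_comp (a : MulAut M) {n : ℤ} {g : M → M} (hg : g ∈ aSet a) :
    ⇑(a ^ n) ∘ g ∈ aSet a := by
  obtain ⟨m, rfl⟩ := hg
  refine ⟨n + m, ?_⟩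
  show ⇑(a ^ (n + m)) = ⇑(a ^ n) ∘ ⇑(a ^ m)
  rw [zpow_add]; rfl

lemma aEllis_isCompact (a : MulAut M) : IsCompact (aEllis a) := isClosed_closure.isCompact

lemma aEllis_nonempty (a : MulAut M) : (aEllis a).Nonempty :=
  ⟨⇑(a ^ (0 : ℤ)), subset_closure ⟨0, rfl⟩⟩

lemma comp_left_cont {u : M → M} (hu : Continuous u) :
    Continuous (fun g : M → M => u ∘ g) :=
  continuous_pi fun x => hu.comp (continuous_apply x)

lemma comp_right_cont (g : M → M) :
    Continuous (fun u : M → M => u ∘ g) :=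
  continuous_pi fun x => continuous_apply (g x)

lemma aEllis_comp (a : MulAut M) (hac : Continuous ⇑a) {f g : M → M}
    (hf : f ∈ aEllis a) (hg : g ∈ aEllis a) :
    f ∘ g ∈ aEllis a := by
  have step1 : ∀ n : ℤ, ∀ u ∈ aEllis a, ⇑(a ^ n) ∘ u ∈ aEllis a := by
    intro n u hu
    have hc : Continuous (fun v : M → M => ⇑(a ^ n) ∘ v) :=
      comp_left_cont (ha_zpow_cont a hac n)
    have himg : (fun v : M → M => ⇑(a ^ n) ∘ v) '' (aSet a) ⊆ aEllis a := by
      rintro - ⟨v, hv, rfl⟩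
      exact subset_closure (aSet_comp a hv)
    have h1 := (image_closure_subset_closure_image hc (s := aSet a))
    have h2 : (fun v : M → M => ⇑(a ^ n) ∘ v) '' (aEllis a) ⊆ closure (aEllis a) :=
      subset_trans h1 (closure_mono himg)
    have h3 : closure (aEllis a) = aEllis a := closure_closure
    rw [h3] at h2
    exact h2 ⟨u, hu, rfl⟩
  have hc : Continuous (fun v : M → M => v ∘ g) := comp_right_cont g
  have himg : (fun v : M → M => v ∘ g) '' (aSet a) ⊆ aEllis a := by
    rintro - ⟨v, ⟨n, rfl⟩, rfl⟩
    exact step1 n g hg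
  have h1 := image_closure_subset_closure_image hc (s := aSet a)
  have h2 : (fun v : M → M => v ∘ g) '' (aEllis a) ⊆ closure (aEllis a) :=
    subset_trans h1 (closure_mono himg)
  have h3 : closure (aEllis a) = aEllis a := closure_closure
  rw [h3] at h2
  exact h2 ⟨f, hf, rfl⟩

lemma aEllis_mul (a : MulAut M) {f : M → M} (hf : f ∈ aEllis a) (x y : M) :
    f (x * y) = f x * f y := by
  have hcl : IsClosed {u : M → M | u (x * y) = u x * u y} :=
    isClosed_eq (continuous_apply _) ((continuous_apply x).mul (continuous_apply y))
  have hsub : aSet a ⊆ {u : M → M | u (x * y) = u x * u y} := by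
    rintro - ⟨n, rfl⟩; exact map_mul (a ^ n) x y
  exact closure_minimal hsub hcl hf

lemma aEllis_orbitMem (a : MulAut M) {f : M → M} (hf : f ∈ aEllis a) (x : M) :
    f x ∈ closure (aOrbit a x) := by
  have hcl : IsClosed {u : M → M | u x ∈ closure (aOrbit a x)} :=
    IsClosed.preimage (continuous_apply x) isClosed_closure
  have hsub : aSet a ⊆ {u : M → M | u x ∈ closure (aOrbit a x)} := by
    rintro - ⟨n, rfl⟩; exact subset_closure ⟨n, rfl⟩
  exact closure_minimal hsub hcl hf

lemma aEllis_one (a : MulAut M) {f : M → M} (hf : f ∈ aEllis a) : f 1 = 1 := by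
  have h := aEllis_mul a hf 1 1
  rw [one_mul] at h
  nth_rewrite 1 [← mul_one (f 1)] at h
  exact (mul_left_cancel h).symm

lemma aEllis_inj (a : MulAut M) (had : ∀ x : M, x ≠ 1 → (1 : M) ∉ closure (aOrbit a x))
    {f : M → M} (hf : f ∈ aEllis a) : Function.Injective f := by
  intro x y hxy
  by_contra hne
  have hxy1 : x * y⁻¹ ≠ 1 := fun h => hne (mul_inv_eq_one.mp h)
  have hinv : f y⁻¹ = (f y)⁻¹ := by
    have h := aEllis_mul a hf y y⁻¹
    rw [mul_inv_cancel, aEllis_one a hf] at h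
    exact (eq_inv_of_mul_eq_one_right h.symm)
  have hone : f (x * y⁻¹) = 1 := by
    rw [aEllis_mul a hf x y⁻¹, hxy, hinv, mul_inv_cancel]
  exact had _ hxy1 (hone ▸ aEllis_orbitMem a hf (x * y⁻¹))

lemma aEllis_leftInv (a : MulAut M) (hac : Continuous ⇑a)
    (had : ∀ x : M, x ≠ 1 → (1 : M) ∉ closure (aOrbit a x))
    {τ : M → M} (hτ : τ ∈ aEllis a) :
    ∃ σ ∈ aEllis a, ∀ x, σ (τ x) = x := by
  classical
  letI : TopologicalSpace (Function.End M) := Pi.topologicalSpace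
  haveI : T2Space (Function.End M) := by show T2Space (M → M); infer_instance
  have hcml : ∀ r : Function.End M, Continuous (· * r) := by
    intro r
    show Continuous (fun u : M → M => u ∘ r)
    exact comp_right_cont r
  set s : Set (Function.End M) := (fun u : M → M => u ∘ τ) '' (aEllis a) with hs
  have snemp : s.Nonempty := (aEllis_nonempty a).image _
  have scomp : IsCompact s := (aEllis_isCompact a).image (comp_right_cont τ)
  have smul : ∀ x ∈ s, ∀ y ∈ s, x * y ∈ s := by
    rintro - ⟨g, hg, rfl⟩ - ⟨h, hh, rfl⟩
    exact ⟨g ∘ (τ ∘ h), aEllis_comp a hac hg (aEllis_comp a hac hτ hh), rfl⟩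
  obtain ⟨m, hm, hidem⟩ :=
    exists_idempotent_in_compact_subsemigroup hcml s snemp scomp smul
  obtain ⟨g, hg, hgm⟩ := hm
  have hmE : (m : M → M) ∈ aEllis a := by
    rw [← hgm]; exact aEllis_comp a hac hg hτ
  have hminj : Function.Injective (m : M → M) := aEllis_inj a had hmE
  have hid : ∀ x, (m : M → M) x = x := by
    intro x
    exact hminj (congrFun hidem x)
  refine ⟨g, hg, fun x => ?_⟩
  have h2 := hid x
  rw [← hgm] at h2
  exact h2

end Ellis

section Abstract
variable {M : Type*} [Group M] [TopologicalSpace M] [IsTopologicalGroup M]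
  [CompactSpace M] [T2Space M]

/-- The orbit of `x` under a subgroup of automorphisms. -/
def gOrbit (𝒢 : Subgroup (MulAut M)) (x : M) : Set M := {y : M | ∃ γ ∈ 𝒢, γ x = y}

/-- The combined orbit. -/
def jOrbit (𝒢 : Subgroup (MulAut M)) (a : MulAut M) (z : M) : Set M :=
  {y : M | ∃ γ ∈ 𝒢, ∃ n : ℤ, γ ((a ^ n) z) = y}

/-- Continuous real functions whose `𝒢`-orbit (under composition) is totally bounded,
expressed concretely through finite `ε`-nets. -/
def CC (𝒢 : Subgroup (MulAut M)) : Set (M → ℝ) :=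
  {h : M → ℝ | Continuous h ∧ ∀ ε : ℝ, 0 < ε → ∃ T : Finset (M → ℝ),
    (∀ t ∈ T, Continuous t) ∧
    ∀ γ ∈ 𝒢, ∃ t ∈ T, ∀ x : M, |h (γ x) - t x| ≤ ε}

/-- The subgroup of elements that "act trivially" on all almost periodic functions. -/
def HH (𝒢 : Subgroup (MulAut M)) : Set M :=
  {x : M | ∀ h ∈ CC 𝒢, ∀ γ ∈ 𝒢, ∀ b : M, h (b * γ x) = h b}

/-- The defect function. -/
noncomputable def ρρ (𝒢 : Subgroup (MulAut M)) (h : M → ℝ) (x : M) : ℝ :=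
  sSup {r : ℝ | ∃ γ ∈ 𝒢, ∃ b : M, r = |h (b * γ x) - h b|}

section rho
variable (𝒢 : Subgroup (MulAut M)) (h : M → ℝ)

lemma rhoSet_nonempty (x : M) :
    {r : ℝ | ∃ γ ∈ 𝒢, ∃ b : M, r = |h (b * γ x) - h b|}.Nonempty :=
  ⟨|h (1 * (1 : MulAut M) x) - h 1|, ⟨1, 𝒢.one_mem, 1, rfl⟩⟩

lemma exists_bound (hc : Continuous h) : ∃ C : ℝ, ∀ y : M, |h y| ≤ C := by
  obtain ⟨C, hC⟩ := (isCompact_range (hc.abs)).bddAbove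
  exact ⟨C, fun y => hC ⟨y, rfl⟩⟩

lemma rhoSet_bddAbove (hc : Continuous h) (x : M) :
    BddAbove {r : ℝ | ∃ γ ∈ 𝒢, ∃ b : M, r = |h (b * γ x) - h b|} := by
  obtain ⟨C, hC⟩ := exists_bound h hc
  refine ⟨2 * C, ?_⟩
  rintro - ⟨γ, hγ, b, rfl⟩
  calc |h (b * γ x) - h b| ≤ |h (b * γ x)| + |h b| := abs_sub _ _
    _ ≤ C + C := add_le_add (hC _) (hC _)
    _ = 2 * C := by ring

lemma rho_le_elem (hc : Continuous h) {x : M} {γ : MulAut M} (hγ : γ ∈ 𝒢) (b : M) :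
    |h (b * γ x) - h b| ≤ ρρ 𝒢 h x :=
  le_csSup (rhoSet_bddAbove 𝒢 h hc x) ⟨γ, hγ, b, rfl⟩

lemma rho_le_of (x : M) {c : ℝ}
    (hall : ∀ γ ∈ 𝒢, ∀ b : M, |h (b * γ x) - h b| ≤ c) :
    ρρ 𝒢 h x ≤ c := by
  apply csSup_le (rhoSet_nonempty 𝒢 h x)
  rintro - ⟨γ, hγ, b, rfl⟩
  exact hall γ hγ b

lemma rho_nonneg (hc : Continuous h) (x : M) : 0 ≤ ρρ 𝒢 h x :=
  le_trans (abs_nonneg _) (rho_le_elem 𝒢 h hc 𝒢.one_mem 1)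

lemma rho_mono (hc : Continuous h) (x : M) {γ₀ : MulAut M} (hγ₀ : γ₀ ∈ 𝒢) :
    ρρ 𝒢 h x ≤ ρρ 𝒢 h (γ₀ x) := by
  apply csSup_le (rhoSet_nonempty 𝒢 h x)
  rintro - ⟨γ, hγ, b, rfl⟩
  have key : γ x = (γ * γ₀⁻¹) (γ₀ x) := by
    simp [MulAut.mul_apply]
  rw [key]
  exact rho_le_elem 𝒢 h hc (𝒢.mul_mem hγ (𝒢.inv_mem hγ₀)) b

lemma rho_eq_zero_apply (hc : Continuous h) {x : M} (hx : ρρ 𝒢 h x ≤ 0)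
    {γ : MulAut M} (hγ : γ ∈ 𝒢) (b : M) : h (b * γ x) = h b := by
  have h1 := rho_le_elem 𝒢 h hc (x := x) hγ b
  have h2 : |h (b * γ x) - h b| ≤ 0 := le_trans h1 hx
  have := abs_nonneg (h (b * γ x) - h b)
  have h3 : |h (b * γ x) - h b| = 0 := le_antisymm h2 this
  have := abs_eq_zero.mp h3
  linarith

/-- Key equicontinuity estimate at the identity. -/
lemma rho_small_near_one {h : M → ℝ} (hh : h ∈ CC 𝒢) {ε : ℝ} (hε : 0 < ε) :
    ∃ V : Set M, IsOpen V ∧ (1 : M) ∈ V ∧ ∀ x ∈ V, ρρ 𝒢 h x ≤ ε := by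
  classical
  obtain ⟨hc, hnet⟩ := hh
  obtain ⟨T, hTc, hT⟩ := hnet (ε / 3) (by linarith)
  -- for each t ∈ T, tube lemma
  have tube : ∀ t ∈ T, ∃ V : Set M, IsOpen V ∧ (1 : M) ∈ V ∧
      ∀ (c : M), ∀ x ∈ V, |t (c * x) - t c| ≤ ε / 3 := by
    intro t ht
    have hGt : Continuous (fun p : M × M => t (p.1 * p.2) - t p.1) :=
      ((hTc t ht).comp (continuous_fst.mul continuous_snd)).sub
        ((hTc t ht).comp continuous_fst)
    set U : Set (M × M) := {p | |t (p.1 * p.2) - t p.1| < ε / 3} with hU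
    have hUopen : IsOpen U := by
      have : U = (fun p : M × M => |t (p.1 * p.2) - t p.1|) ⁻¹' (Set.Iio (ε / 3)) := rfl
      rw [this]
      exact (hGt.abs).isOpen_preimage _ isOpen_Iio
    have hsub : (Set.univ : Set M) ×ˢ ({1} : Set M) ⊆ U := by
      rintro ⟨c, x⟩ ⟨-, hx⟩
      simp only [Set.mem_singleton_iff] at hx
      subst hx
      simp only [hU, Set.mem_setOf_eq, mul_one, sub_self, abs_zero]
      linarith
    obtain ⟨V₁, V₂, hV₁, hV₂, hsub₁, hsub₂, hVU⟩ :=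
      generalized_tube_lemma isCompact_univ isCompact_singleton hUopen hsub
    refine ⟨V₂, hV₂, hsub₂ rfl, fun c x hx => ?_⟩
    have : (c, x) ∈ U := hVU ⟨hsub₁ (Set.mem_univ c), hx⟩
    exact le_of_lt this
  choose Vt hVtopen hVt1 hVtprop using tube
  refine ⟨⋂ t : {t // t ∈ T}, Vt t.1 t.2, ?_, ?_, ?_⟩
  · exact isOpen_iInter_of_finite fun t => hVtopen t.1 t.2
  · exact Set.mem_iInter.mpr fun t => hVt1 t.1 t.2
  · intro x hx
    apply rho_le_of
    intro γ hγ b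
    obtain ⟨t, ht, htprop⟩ := hT γ hγ
    have key1 : b * γ x = γ (γ⁻¹ b * x) := by
      rw [map_mul]
      simp
    have key2 : h b = h (γ (γ⁻¹ b)) := by simp
    rw [key1, key2]
    have hxV : x ∈ Vt t ht := Set.mem_iInter.mp hx ⟨t, ht⟩
    set c : M := γ⁻¹ b with hc'
    calc |h (γ (c * x)) - h (γ c)|
        ≤ |h (γ (c * x)) - t (c * x)| + |t (c * x) - t c| + |t c - h (γ c)| := by
          have := abs_sub_le (h (γ (c * x))) (t (c * x)) (h (γ c))
          have h2 := abs_sub_le (t (c * x)) (t c) (h (γ c))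
          linarith [abs_sub_le (h (γ (c*x))) (t (c*x)) (h (γ c)),
            abs_sub_le (t (c*x)) (t c) (h (γ c))]
      _ ≤ ε / 3 + ε / 3 + ε / 3 := by
          have e1 := htprop (c * x)
          have e2 := hVtprop t ht c x hxV
          have e3 := htprop c
          rw [abs_sub_comm (t c) (h (γ c))] at *
          exact add_le_add (add_le_add e1 e2) e3
      _ = ε := by ring

end rho

section Hsub
variable (𝒢 : Subgroup (MulAut M)) (a : MulAut M)

/-- Stability of `CC` under composition with a normalizing automorphism. -/
lemma CC_comp (e : MulAut M) (he : ∀ γ ∈ 𝒢, e * γ * e⁻¹ ∈ 𝒢) (hec : Continuous ⇑e)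
    {h : M → ℝ} (hh : h ∈ CC 𝒢) : (fun x => h (e x)) ∈ CC 𝒢 := by
  classical
  obtain ⟨hc, hnet⟩ := hh
  refine ⟨hc.comp hec, fun ε hε => ?_⟩
  obtain ⟨T, hTc, hT⟩ := hnet ε hε
  refine ⟨T.image (fun t => (fun x => t (e x))), ?_, ?_⟩
  · intro t ht
    obtain ⟨t₀, ht₀, rfl⟩ := Finset.mem_image.mp ht
    exact (hTc t₀ ht₀).comp hec
  · intro γ hγ
    obtain ⟨t, ht, htp⟩ := hT (e * γ * e⁻¹) (he γ hγ)
    refine ⟨(fun x => t (e x)), Finset.mem_image_of_mem _ ht, fun x => ?_⟩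
    show |h (e (γ x)) - t (e x)| ≤ ε
    have key : e (γ x) = (e * γ * e⁻¹) (e x) := by
      simp [MulAut.mul_apply]
    rw [key]
    exact htp (e x)

lemma HH_one : (1 : M) ∈ HH 𝒢 := by
  intro h hh γ hγ b
  rw [map_one, mul_one]

lemma HH_mul {x y : M} (hx : x ∈ HH 𝒢) (hy : y ∈ HH 𝒢) : x * y ∈ HH 𝒢 := by
  intro h hh γ hγ b
  rw [map_mul, ← mul_assoc]
  rw [hy h hh γ hγ (b * γ x), hx h hh γ hγ b]

lemma HH_inv {x : M} (hx : x ∈ HH 𝒢) : x⁻¹ ∈ HH 𝒢 := by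
  intro h hh γ hγ b
  have h1 := hx h hh γ hγ (b * γ x⁻¹)
  have e : (b * γ x⁻¹) * γ x = b := by
    rw [mul_assoc, ← map_mul, inv_mul_cancel, map_one, mul_one]
  rw [e] at h1
  exact h1.symm

lemma HH_isClosed (hGc : ∀ γ ∈ 𝒢, Continuous ⇑γ) : IsClosed (HH 𝒢) := by
  have : HH 𝒢 = ⋂ (h : {h : M → ℝ // h ∈ CC 𝒢}) (γ : {γ : MulAut M // γ ∈ 𝒢}) (b : M),
      {x : M | h.1 (b * γ.1 x) = h.1 b} := by
    ext x
    simp only [Set.mem_iInter, Set.mem_setOf_eq]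
    constructor
    · intro hx h γ b; exact hx h.1 h.2 γ.1 γ.2 b
    · intro hx h hh γ hγ b; exact hx ⟨h, hh⟩ ⟨γ, hγ⟩ b
  rw [this]
  refine isClosed_iInter fun h => isClosed_iInter fun γ => isClosed_iInter fun b => ?_
  exact isClosed_eq (h.2.1.comp (continuous_const.mul (hGc γ.1 γ.2))) continuous_const

lemma HH_gamma_inv {γ₀ : MulAut M} (hγ₀ : γ₀ ∈ 𝒢) {x : M} (hx : x ∈ HH 𝒢) :
    γ₀ x ∈ HH 𝒢 := by
  intro h hh γ hγ b
  have key : γ (γ₀ x) = (γ * γ₀) x := rfl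
  rw [key]
  exact hx h hh (γ * γ₀) (𝒢.mul_mem hγ hγ₀) b

lemma HH_a_inv (hnorm : ∀ γ : MulAut M, γ ∈ 𝒢 ↔ a * γ * a⁻¹ ∈ 𝒢) (hac : Continuous ⇑a)
    {x : M} (hx : x ∈ HH 𝒢) : a x ∈ HH 𝒢 := by
  intro h hh γ hγ b
  have hγ' : a⁻¹ * γ * a ∈ 𝒢 := by
    rw [hnorm]
    have : a * (a⁻¹ * γ * a) * a⁻¹ = γ := by group
    rw [this]; exact hγ
  have key : b * γ (a x) = a ((a⁻¹ b) * ((a⁻¹ * γ * a) x)) := by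
    rw [map_mul]
    simp [MulAut.mul_apply]
  have key2 : h b = h (a ((a⁻¹ : MulAut M) b)) := by simp
  rw [key, key2]
  have hha : (fun y => h (a y)) ∈ CC 𝒢 :=
    CC_comp 𝒢 a (fun γ hγ => (hnorm γ).mp hγ) hac hh
  exact hx (fun y => h (a y)) hha (a⁻¹ * γ * a) hγ' ((a⁻¹ : MulAut M) b)

lemma HH_a_inv' (hnorm : ∀ γ : MulAut M, γ ∈ 𝒢 ↔ a * γ * a⁻¹ ∈ 𝒢) (hac : Continuous ⇑a)
    {x : M} (hx : x ∈ HH 𝒢) : a⁻¹ x ∈ HH 𝒢 := by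
  have hnorm' : ∀ γ : MulAut M, γ ∈ 𝒢 ↔ a⁻¹ * γ * a⁻¹⁻¹ ∈ 𝒢 := by
    intro γ
    constructor
    · intro hγ
      rw [hnorm]
      have e : a * (a⁻¹ * γ * a⁻¹⁻¹) * a⁻¹ = γ := by group
      rw [e]; exact hγ
    · intro hγ
      have h1 := (hnorm _).mp hγ
      have e : a * (a⁻¹ * γ * a⁻¹⁻¹) * a⁻¹ = γ := by group
      rwa [e] at h1
  exact HH_a_inv 𝒢 a⁻¹ hnorm' (ha_inv_cont a hac) hx

lemma HH_zpow_inv (hnorm : ∀ γ : MulAut M, γ ∈ 𝒢 ↔ a * γ * a⁻¹ ∈ 𝒢) (hac : Continuous ⇑a)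
    (n : ℤ) {x : M} (hx : x ∈ HH 𝒢) : (a ^ n) x ∈ HH 𝒢 := by
  induction n using Int.induction_on with
  | zero => simpa using hx
  | succ k ih =>
      have e : (a ^ ((k : ℤ) + 1)) x = a ((a ^ (k : ℤ)) x) := by
        rw [show (k:ℤ) + 1 = 1 + (k:ℤ) by ring, zpow_add, zpow_one]
        rfl
      rw [e]
      exact HH_a_inv 𝒢 a hnorm hac ih
  | pred k ih =>
      have e : (a ^ (-(k : ℤ) - 1)) x = a⁻¹ ((a ^ (-(k : ℤ))) x) := by
        have : (a ^ (-(k : ℤ) - 1)) = a⁻¹ * a ^ (-(k : ℤ)) := by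
          rw [← zpow_neg_one, ← zpow_add]
          congr 1
          ring
        rw [this]; rfl
      rw [e]
      exact HH_a_inv' 𝒢 a hnorm hac ih

lemma rho_isClosed_le {h : M → ℝ} (hh : h ∈ CC 𝒢) (hGc : ∀ γ ∈ 𝒢, Continuous ⇑γ) (c : ℝ)
    (hc : 0 ≤ c) : IsClosed {x : M | ρρ 𝒢 h x ≤ c} := by
  have heq : {x : M | ρρ 𝒢 h x ≤ c} =
      ⋂ (γ : {γ : MulAut M // γ ∈ 𝒢}) (b : M), {x : M | |h (b * γ.1 x) - h b| ≤ c} := by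
    ext x
    simp only [Set.mem_iInter, Set.mem_setOf_eq]
    constructor
    · intro hx γ b
      exact le_trans (rho_le_elem 𝒢 h hh.1 (x := x) γ.2 b) hx
    · intro hx
      exact rho_le_of 𝒢 h x (fun γ hγ b => hx ⟨γ, hγ⟩ b)
  rw [heq]
  refine isClosed_iInter fun γ => isClosed_iInter fun b => ?_
  exact isClosed_le ((hh.1.comp (continuous_const.mul (hGc γ.1 γ.2))).sub continuous_const).abs
    continuous_const

/-- **Descent**: a point whose combined orbit closure contains the identity lies in `HH`. -/
lemma descent (hGc : ∀ γ ∈ 𝒢, Continuous ⇑γ) (hac : Continuous ⇑a)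
    (had : ∀ x : M, x ≠ 1 → (1 : M) ∉ closure (aOrbit a x))
    (hnorm : ∀ γ : MulAut M, γ ∈ 𝒢 ↔ a * γ * a⁻¹ ∈ 𝒢)
    {z : M} (hbad : (1 : M) ∈ closure (jOrbit 𝒢 a z)) :
    z ∈ HH 𝒢 := by
  classical
  set A : Set M := closure (aOrbit a z) with hA
  have hAcomp : IsCompact A := isClosed_closure.isCompact
  set ι := {h : M → ℝ // h ∈ CC 𝒢} × ℕ with hι
  set Z : ι → Set M := fun i => {x : M | ρρ 𝒢 i.1.1 x ≤ 1/(i.2+1)} with hZ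
  have hZc : ∀ i, IsClosed (Z i) := by
    intro i
    exact rho_isClosed_le 𝒢 i.1.2 hGc _ (by positivity)
  have hVex : ∀ i : ι, ∃ V : Set M, IsOpen V ∧ (1 : M) ∈ V ∧
      ∀ x ∈ V, ρρ 𝒢 i.1.1 x ≤ 1/(i.2+1) := by
    intro i
    exact rho_small_near_one 𝒢 i.1.2 (by positivity)
  choose Vf hVo hV1 hVp using hVex
  have hW : (A ∩ ⋂ i, Z i).Nonempty := by
    by_contra hW
    rw [Set.not_nonempty_iff_eq_empty] at hW
    obtain ⟨t, ht⟩ := hAcomp.elim_finite_subfamily_closed Z hZc hW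
    set V : Set M := ⋂ i ∈ t, Vf i with hV
    have hVopen : IsOpen V := isOpen_biInter_finset (fun i _ => hVo i)
    have hV1' : (1 : M) ∈ V := Set.mem_biInter (fun i _ => hV1 i)
    obtain ⟨y, hyV, hyO⟩ := _root_.mem_closure_iff.mp hbad V hVopen hV1'
    obtain ⟨γ, hγ, n, rfl⟩ := hyO
    have hmem : (a ^ n) z ∈ A ∩ ⋂ i ∈ t, Z i := by
      constructor
      · exact subset_closure ⟨n, rfl⟩
      · refine Set.mem_biInter fun i hi => ?_
        have h1 : ρρ 𝒢 i.1.1 (γ ((a ^ n) z)) ≤ 1/(i.2+1) :=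
          hVp i _ (Set.mem_iInter₂.mp hyV i hi)
        exact le_trans (rho_mono 𝒢 i.1.1 i.1.2.1 _ hγ) h1
    rw [ht] at hmem
    exact hmem
  obtain ⟨w, hwA, hwZ⟩ := hW
  have hwH : w ∈ HH 𝒢 := by
    intro h hh γ hγ b
    apply rho_eq_zero_apply 𝒢 h hh.1 (x := w) _ hγ b
    by_contra hpos
    push_neg at hpos
    have hpos' : 0 < ρρ 𝒢 h w := hpos
    obtain ⟨k, hk⟩ := exists_nat_one_div_lt hpos'
    have := Set.mem_iInter.mp hwZ (⟨h, hh⟩, k)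
    simp only [hZ, Set.mem_setOf_eq] at this
    have : ρρ 𝒢 h w ≤ 1/(k+1) := by exact_mod_cast this
    linarith
  -- find τ ∈ aEllis with τ z = w
  have hSclosed : IsClosed ((fun u : M → M => u z) '' aEllis a) :=
    ((aEllis_isCompact a).image (continuous_apply z)).isClosed
  have hsub : aOrbit a z ⊆ (fun u : M → M => u z) '' aEllis a := by
    rintro - ⟨n, rfl⟩
    exact ⟨⇑(a ^ n), subset_closure ⟨n, rfl⟩, rfl⟩
  have hAsub : A ⊆ (fun u : M → M => u z) '' aEllis a :=
    closure_minimal hsub hSclosed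
  obtain ⟨τ, hτ, hτz⟩ := hAsub hwA
  obtain ⟨σ, hσ, hσi⟩ := aEllis_leftInv a hac had hτ
  have hz : z = σ w := by rw [← hτz]; exact (hσi z).symm
  have horb : aOrbit a w ⊆ HH 𝒢 := by
    rintro - ⟨n, rfl⟩
    exact HH_zpow_inv 𝒢 a hnorm hac n hwH
  have : σ w ∈ HH 𝒢 := by
    have h1 := aEllis_orbitMem a hσ w
    exact (HH_isClosed 𝒢 hGc).closure_subset_iff.mpr horb h1
  rw [hz]; exact this

end Hsub

section ErgodicPart

open MeasureTheory TopologicalSpace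
open scoped ENNReal

variable [TopologicalSpace.MetrizableSpace M]

/-- If all almost periodic functions are constant and `M` is nontrivial,
then some nonidentity point has `1` in its `𝒢`-orbit closure. -/
lemma lemmaC (𝒢 : Subgroup (MulAut M)) (hGc : ∀ γ ∈ 𝒢, Continuous ⇑γ)
    (hconst : ∀ h ∈ CC 𝒢, ∀ x : M, h x = h 1)
    {m₀ : M} (hm₀ : m₀ ≠ 1) :
    ∃ x : M, x ≠ 1 ∧ (1 : M) ∈ closure (gOrbit 𝒢 x) := by
  classical
  letI : MeasurableSpace M := borel M
  haveI : BorelSpace M := ⟨rfl⟩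
  letI : MetricSpace M := TopologicalSpace.metrizableSpaceMetric M
  haveI : SecondCountableTopology M := by
    haveI : ProperSpace M := ⟨fun x r => isCompact_univ.of_isClosed_subset
      Metric.isClosed_closedBall (Set.subset_univ _)⟩
    infer_instance
  set μ : Measure M := Measure.haarMeasure (⊤ : TopologicalSpace.PositiveCompacts M) with hμ
  haveI : IsProbabilityMeasure μ := by
    constructor
    rw [← TopologicalSpace.PositiveCompacts.coe_top (α := M)]
    exact Measure.haarMeasure_self
  -- right invariance
  have hmapRight : ∀ g : M, μ.map (· * g) = μ := by
    intro g
    haveI : IsProbabilityMeasure (μ.map (· * g)) :=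
      Measure.isProbabilityMeasure_map (measurable_mul_const g).aemeasurable
    have h1 := Measure.haarMeasure_unique (μ.map (· * g)) (⊤ : TopologicalSpace.PositiveCompacts M)
    rw [h1, ← hμ]
    have h2 : (μ.map (· * g)) ((⊤ : TopologicalSpace.PositiveCompacts M) : Set M) = 1 := by
      rw [TopologicalSpace.PositiveCompacts.coe_top]
      exact measure_univ
    rw [h2, one_smul]
  have hRightPre : ∀ (g : M) (S : Set M), MeasurableSet S → μ ((· * g) ⁻¹' S) = μ S := by
    intro g S hS
    conv_rhs => rw [← hmapRight g]
    rw [Measure.map_apply (measurable_mul_const g) hS]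
  -- automorphism invariance
  have hmapAut : ∀ e : MulAut M, Continuous ⇑e → μ.map ⇑e = μ := by
    intro e he
    haveI : IsProbabilityMeasure (μ.map ⇑e) :=
      Measure.isProbabilityMeasure_map he.measurable.aemeasurable
    haveI : (μ.map ⇑e).IsMulLeftInvariant :=
      MeasureTheory.isMulLeftInvariant_map e.toMonoidHom.toMulHom he.measurable e.surjective
    have h1 := Measure.haarMeasure_unique (μ.map ⇑e) (⊤ : TopologicalSpace.PositiveCompacts M)
    rw [h1, ← hμ]
    have h2 : (μ.map ⇑e) ((⊤ : TopologicalSpace.PositiveCompacts M) : Set M) = 1 := by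
      rw [TopologicalSpace.PositiveCompacts.coe_top]
      exact measure_univ
    rw [h2, one_smul]
  have hAutPre : ∀ (e : MulAut M), Continuous ⇑e → ∀ (S : Set M), MeasurableSet S →
      μ (⇑e ⁻¹' S) = μ S := by
    intro e he S hS
    conv_rhs => rw [← hmapAut e he]
    rw [Measure.map_apply he.measurable hS]
  -- the saturation of an open set
  set EB : Set M → Set M := fun B => ⋃ γ : {γ : MulAut M // γ ∈ 𝒢}, ⇑γ.1 '' B with hEB
  have hEBopen : ∀ B : Set M, IsOpen B → IsOpen (EB B) := by
    intro B hB
    refine isOpen_iUnion fun γ => ?_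
    have himg : ⇑γ.1 '' B = ⇑(γ.1⁻¹) ⁻¹' B := by
      ext y
      constructor
      · rintro ⟨b, hb, rfl⟩
        show (γ.1⁻¹) (γ.1 b) ∈ B
        simp only [← MulAut.mul_apply, inv_mul_cancel, MulAut.one_apply]
        exact hb
      · intro hy
        refine ⟨(γ.1⁻¹) y, hy, ?_⟩
        simp only [← MulAut.mul_apply, mul_inv_cancel, MulAut.one_apply]
    rw [himg]
    exact (hGc _ (𝒢.inv_mem γ.2)).isOpen_preimage _ hB
  have hEBinv : ∀ B : Set M, ∀ γ₀ : MulAut M, γ₀ ∈ 𝒢 → ⇑γ₀ ⁻¹' (EB B) = EB B := by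
    intro B γ₀ hγ₀
    ext y
    simp only [hEB, Set.mem_preimage, Set.mem_iUnion]
    constructor
    · rintro ⟨γ, b, hb, hγb⟩
      refine ⟨⟨γ₀⁻¹ * γ.1, 𝒢.mul_mem (𝒢.inv_mem hγ₀) γ.2⟩, b, hb, ?_⟩
      show (γ₀⁻¹) (γ.1 b) = y
      rw [hγb]
      simp only [← MulAut.mul_apply, inv_mul_cancel, MulAut.one_apply]
    · rintro ⟨γ, b, hb, hγb⟩
      refine ⟨⟨γ₀ * γ.1, 𝒢.mul_mem hγ₀ γ.2⟩, b, hb, ?_⟩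
      show γ₀ (γ.1 b) = γ₀ y
      rw [hγb]
  have hEBsub : ∀ B : Set M, B ⊆ EB B := by
    intro B b hb
    exact Set.mem_iUnion.mpr ⟨⟨1, 𝒢.one_mem⟩, b, hb, rfl⟩
  -- the θ-lemma : translation continuity in measure
  have htheta : ∀ E : Set M, IsOpen E → ∀ ε : ℝ≥0∞, 0 < ε →
      ∃ V : Set M, IsOpen V ∧ (1 : M) ∈ V ∧
        ∀ u ∈ V, μ (E \ (· * u) ⁻¹' E) < ε := by
    intro E hE ε hε
    obtain ⟨K, hKE, hKcomp, hKdiff⟩ :=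
      hE.measurableSet.exists_isCompact_diff_lt (measure_ne_top μ E) hε.ne'
    have hW : IsOpen {p : M × M | p.1 * p.2 ∈ E} :=
      hE.preimage (continuous_fst.mul continuous_snd)
    have hsub : K ×ˢ ({1} : Set M) ⊆ {p : M × M | p.1 * p.2 ∈ E} := by
      rintro ⟨k, u⟩ ⟨hk, hu⟩
      simp only [Set.mem_singleton_iff] at hu
      subst hu
      simpa using hKE hk
    obtain ⟨V₁, V₂, hV₁, hV₂, hKV₁, h1V₂, hVW⟩ :=
      generalized_tube_lemma hKcomp isCompact_singleton hW hsub
    refine ⟨V₂, hV₂, h1V₂ rfl, fun u hu => ?_⟩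
    refine lt_of_le_of_lt (measure_mono ?_) hKdiff
    intro y hy
    obtain ⟨hyE, hyu⟩ := hy
    refine ⟨hyE, fun hyK => hyu ?_⟩
    exact hVW (Set.mk_mem_prod (hKV₁ hyK) hu)
  -- main analysis for a fixed nonempty basic open set
  have hfull : ∀ B : Set M, IsOpen B → B.Nonempty → μ (EB B) = 1 := by
    intro B hBopen hBne
    set E := EB B with hE
    have hEopen : IsOpen E := hEBopen B hBopen
    have hEmeas : MeasurableSet E := hEopen.measurableSet
    set T : M → Set M := fun x => (· * x) ⁻¹' E with hT
    have hTmeas : ∀ x, MeasurableSet (T x) := fun x =>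
      hEmeas.preimage (measurable_mul_const x)
    set ψ : M → ℝ := fun x => (μ (E ∩ T x)).toReal with hψ
    -- difference bound
    have hdiff : ∀ x x' : M, μ (T x \ T x') = μ (E \ T (x⁻¹ * x')) := by
      intro x x'
      have hset : T x \ T x' = (· * x) ⁻¹' (E \ T (x⁻¹ * x')) := by
        ext y
        simp only [hT, Set.mem_diff, Set.mem_preimage]
        constructor
        · rintro ⟨h1, h2⟩
          refine ⟨h1, fun h3 => h2 ?_⟩
          have : y * x * (x⁻¹ * x') = y * x' := by group
          rwa [this] at h3
        · rintro ⟨h1, h2⟩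
          refine ⟨h1, fun h3 => h2 ?_⟩
          have : y * x * (x⁻¹ * x') = y * x' := by group
          rwa [this]
      rw [hset]
      exact hRightPre x _ (hEmeas.diff (hTmeas _))
    -- continuity of ψ
    have hψcont : Continuous ψ := by
      rw [Metric.continuous_iff]
      intro x₀ ε hε
      obtain ⟨V, hVopen, hV1, hVprop⟩ := htheta E hEopen (ENNReal.ofReal (ε/2))
        (by positivity)
      have hcont1 : Continuous fun x : M => x⁻¹ * x₀ := (continuous_inv).mul continuous_const
      have hcont2 : Continuous fun x : M => x₀⁻¹ * x := continuous_const.mul continuous_id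
      set U : Set M := ((fun x : M => x⁻¹ * x₀) ⁻¹' V) ∩ ((fun x : M => x₀⁻¹ * x) ⁻¹' V)
        with hU
      have hUopen : IsOpen U := (hVopen.preimage hcont1).inter (hVopen.preimage hcont2)
      have hx₀U : x₀ ∈ U := by
        constructor
        · show x₀⁻¹ * x₀ ∈ V
          rwa [inv_mul_cancel]
        · show x₀⁻¹ * x₀ ∈ V
          rwa [inv_mul_cancel]
      obtain ⟨δ, hδ, hball⟩ := Metric.isOpen_iff.mp hUopen x₀ hx₀U
      refine ⟨δ, hδ, fun x hx => ?_⟩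
      have hxU : x ∈ U := hball hx
      have key1 : μ (T x \ T x₀) < ENNReal.ofReal (ε/2) := by
        rw [hdiff x x₀]
        exact hVprop _ hxU.1
      have key2 : μ (T x₀ \ T x) < ENNReal.ofReal (ε/2) := by
        rw [hdiff x₀ x]
        exact hVprop _ hxU.2
      -- conclude
      have hb1 : μ (E ∩ T x) ≤ μ (E ∩ T x₀) + μ (T x \ T x₀) := by
        refine le_trans (measure_mono ?_) (measure_union_le _ _)
        intro y ⟨hyE, hyT⟩
        by_cases h : y ∈ T x₀
        · exact Or.inl ⟨hyE, h⟩
        · exact Or.inr ⟨hyT, h⟩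
      have hb2 : μ (E ∩ T x₀) ≤ μ (E ∩ T x) + μ (T x₀ \ T x) := by
        refine le_trans (measure_mono ?_) (measure_union_le _ _)
        intro y ⟨hyE, hyT⟩
        by_cases h : y ∈ T x
        · exact Or.inl ⟨hyE, h⟩
        · exact Or.inr ⟨hyT, h⟩
      have hfin : ∀ S : Set M, μ S ≠ ⊤ := fun S => measure_ne_top μ S
      rw [Real.dist_eq]
      have e1 : (μ (E ∩ T x)).toReal ≤ (μ (E ∩ T x₀)).toReal + (μ (T x \ T x₀)).toReal := by
        rw [← ENNReal.toReal_add (hfin _) (hfin _)]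
        exact ENNReal.toReal_mono (by simp [hfin _, ENNReal.add_ne_top]) hb1
      have e2 : (μ (E ∩ T x₀)).toReal ≤ (μ (E ∩ T x)).toReal + (μ (T x₀ \ T x)).toReal := by
        rw [← ENNReal.toReal_add (hfin _) (hfin _)]
        exact ENNReal.toReal_mono (by simp [hfin _, ENNReal.add_ne_top]) hb2
      have e3 : (μ (T x \ T x₀)).toReal < ε/2 := by
        rw [← ENNReal.toReal_ofReal (le_of_lt (by positivity : (0:ℝ) < ε/2))]
        exact ENNReal.toReal_strict_mono (by simp) key1
      have e4 : (μ (T x₀ \ T x)).toReal < ε/2 := by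
        rw [← ENNReal.toReal_ofReal (le_of_lt (by positivity : (0:ℝ) < ε/2))]
        exact ENNReal.toReal_strict_mono (by simp) key2
      rw [abs_sub_lt_iff]
      constructor <;> [skip; skip] <;> simp only [hψ] <;> linarith
    have hEinv : ∀ γ : MulAut M, γ ∈ 𝒢 → ⇑γ ⁻¹' E = E := by
      intro γ hγ
      rw [hE]
      exact hEBinv B γ hγ
    -- invariance of ψ
    have hψinv : ∀ γ : MulAut M, γ ∈ 𝒢 → ∀ x : M, ψ (γ x) = ψ x := by
      intro γ hγ x
      have hpre : ⇑γ ⁻¹' (E ∩ T (γ x)) = E ∩ T x := by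
        ext y
        simp only [Set.mem_preimage, Set.mem_inter_iff, hT]
        constructor
        · rintro ⟨h1, h2⟩
          refine ⟨?_, ?_⟩
          · rw [← hEinv γ hγ]; exact h1
          · show y * x ∈ E
            rw [← hEinv γ hγ]
            show γ (y * x) ∈ E
            rw [map_mul]
            exact h2
        · rintro ⟨h1, h2⟩
          constructor
          · rw [← hEinv γ hγ] at h1; exact h1
          · show γ y * γ x ∈ E
            rw [← map_mul]
            rw [← hEinv γ hγ] at h2
            exact h2
      simp only [hψ]
      congr 1
      rw [← hAutPre γ (hGc γ hγ) (E ∩ T (γ x)) (hEmeas.inter (hTmeas _)), hpre]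
    -- ψ is almost periodic
    have hψCC : ψ ∈ CC 𝒢 := by
      refine ⟨hψcont, fun ε hε => ?_⟩
      refine ⟨{ψ}, ?_, ?_⟩
      · intro t ht
        rw [Finset.mem_singleton] at ht
        subst ht; exact hψcont
      · intro γ hγ
        refine ⟨ψ, Finset.mem_singleton_self ψ, fun x => ?_⟩
        rw [hψinv γ hγ x]
        simp [le_of_lt hε]
    -- so ψ is constant
    have hψconst : ∀ x : M, μ (E ∩ T x) = μ E := by
      intro x
      have h1 := hconst ψ hψCC x
      have h2 : T 1 = E := by
        ext y; simp [hT]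
      have h3 : μ (E ∩ T 1) = μ E := by rw [h2, Set.inter_self]
      have h4 : (μ (E ∩ T x)).toReal = (μ (E ∩ T 1)).toReal := h1
      have := (ENNReal.toReal_eq_toReal_iff' (measure_ne_top μ _) (measure_ne_top μ _)).mp h4
      rw [this, h3]
    -- Fubini
    set c := μ E with hc
    have hind : ∀ x y : M, (E ∩ T x).indicator (1 : M → ℝ≥0∞) y =
        E.indicator (1 : M → ℝ≥0∞) y * E.indicator (1 : M → ℝ≥0∞) (y * x) := by
      intro x y
      by_cases h1 : y ∈ E <;> by_cases h2 : y * x ∈ E <;>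
        simp [Set.indicator_apply, Set.mem_inter_iff, hT, Set.mem_preimage, h1, h2]
    have hmeasmul : Measurable fun p : M × M => p.2 * p.1 :=
      (continuous_snd.mul continuous_fst).measurable
    have hEindmeas : Measurable (E.indicator (1 : M → ℝ≥0∞)) :=
      measurable_one.indicator hEmeas
    have hswap : ∫⁻ x, μ (E ∩ T x) ∂μ = c * c := by
      have step1 : ∀ x, μ (E ∩ T x) = ∫⁻ y, E.indicator (1 : M → ℝ≥0∞) y *
          E.indicator (1 : M → ℝ≥0∞) (y * x) ∂μ := by
        intro x
        rw [← lintegral_indicator_one ((hEmeas.inter (hTmeas x)))]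
        exact lintegral_congr (hind x)
      calc ∫⁻ x, μ (E ∩ T x) ∂μ
          = ∫⁻ x, ∫⁻ y, E.indicator (1 : M → ℝ≥0∞) y *
              E.indicator (1 : M → ℝ≥0∞) (y * x) ∂μ ∂μ := lintegral_congr step1
        _ = ∫⁻ y, ∫⁻ x, E.indicator (1 : M → ℝ≥0∞) y *
              E.indicator (1 : M → ℝ≥0∞) (y * x) ∂μ ∂μ := by
            apply lintegral_lintegral_swap
            apply Measurable.aemeasurable
            exact (hEindmeas.comp measurable_snd).mul (hEindmeas.comp hmeasmul)
        _ = ∫⁻ y, E.indicator (1 : M → ℝ≥0∞) y *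
              (∫⁻ x, E.indicator (1 : M → ℝ≥0∞) (y * x) ∂μ) ∂μ := by
            apply lintegral_congr
            intro y
            exact lintegral_const_mul _ (hEindmeas.comp (measurable_const_mul y))
        _ = ∫⁻ y, E.indicator (1 : M → ℝ≥0∞) y * c ∂μ := by
            apply lintegral_congr
            intro y
            congr 1
            calc ∫⁻ x, E.indicator (1 : M → ℝ≥0∞) (y * x) ∂μ
                = ∫⁻ x, ((y * ·) ⁻¹' E).indicator (1 : M → ℝ≥0∞) x ∂μ := by
                  apply lintegral_congr
                  intro x
                  by_cases h : y * x ∈ E <;>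
                    simp [Set.indicator_apply, h, Set.mem_preimage]
              _ = μ ((y * ·) ⁻¹' E) :=
                  lintegral_indicator_one (hEmeas.preimage (measurable_const_mul y))
              _ = c := measure_preimage_mul μ y E
        _ = (∫⁻ y, E.indicator (1 : M → ℝ≥0∞) y ∂μ) * c :=
            lintegral_mul_const c hEindmeas
        _ = c * c := by rw [lintegral_indicator_one hEmeas]
    have hconst_int : ∫⁻ x, μ (E ∩ T x) ∂μ = c := by
      have : ∀ x : M, μ (E ∩ T x) = c := hψconst
      rw [lintegral_congr this, lintegral_const, measure_univ, mul_one]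
    have hcc : c = c * c := by rw [← hswap]; exact hconst_int.symm
    have hcpos : 0 < c := by
      refine lt_of_lt_of_le ?_ (measure_mono (hEBsub B))
      exact hBopen.measure_pos μ hBne
    have hcne : c ≠ 0 := hcpos.ne'
    have hcfin : c ≠ ⊤ := measure_ne_top μ E
    -- c = c * c with c ≠ 0, finite gives c = 1
    have h5 : c * 1 = c * c := by rw [mul_one]; exact hcc
    exact ((ENNReal.mul_right_inj hcne hcfin).mp h5).symm
  -- countable intersection
  set ℬ : Set (Set M) := {B ∈ TopologicalSpace.countableBasis M | B.Nonempty} with hℬ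
  have hℬcount : ℬ.Countable :=
    (TopologicalSpace.countable_countableBasis M).mono (Set.sep_subset _ _)
  set D : Set M := ⋂ B ∈ ℬ, EB B with hD
  have hDco : μ Dᶜ = 0 := by
    rw [hD, Set.compl_iInter₂]
    refine measure_biUnion_null_iff hℬcount |>.mpr ?_
    intro B hB
    have h1 : μ (EB B) = 1 := hfull B
      (TopologicalSpace.isOpen_of_mem_countableBasis hB.1) hB.2
    have := measure_compl (hEBopen B
      (TopologicalSpace.isOpen_of_mem_countableBasis hB.1)).measurableSet (measure_ne_top μ _)
    rw [this, h1, measure_univ, tsub_self]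
  have hone : μ ({(1:M)}ᶜ ∩ D) = μ ({(1:M)}ᶜ) := measure_inter_conull hDco
  have hpos : 0 < μ ({(1:M)}ᶜ ∩ D) := by
    rw [hone]
    refine IsOpen.measure_pos μ isClosed_singleton.isOpen_compl ⟨m₀, hm₀⟩
  obtain ⟨x, hx⟩ := nonempty_of_measure_ne_zero hpos.ne'
  refine ⟨x, hx.1, ?_⟩
  rw [mem_closure_iff]
  intro o ho h1o
  obtain ⟨B, hBbasis, h1B, hBo⟩ :=
    (TopologicalSpace.isBasis_countableBasis M).exists_subset_of_mem_open h1o ho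
  have hBℬ : B ∈ ℬ := ⟨hBbasis, ⟨1, h1B⟩⟩
  have hxE : x ∈ EB B := (Set.mem_iInter₂.mp hx.2 B hBℬ)
  obtain ⟨γ, b, hb, hγb⟩ := Set.mem_iUnion.mp hxE
  refine ⟨b, hBo hb, ?_⟩
  refine ⟨γ.1⁻¹, 𝒢.inv_mem γ.2, ?_⟩
  rw [← hγb]
  simp only [← MulAut.mul_apply, inv_mul_cancel, MulAut.one_apply]

end ErgodicPart
end Abstract

section Instantiate

open Topology TopologicalSpace

variable {K : Type*} [Group K] [TopologicalSpace K] [IsTopologicalGroup K]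
  [CompactSpace K] [MetrizableSpace K]

/-- Conjugation by powers preserves a normalized subgroup. -/
lemma conj_zpow_mem (Γ : Subgroup (MulAut K)) (α : MulAut K)
    (hconj : ∀ γ : MulAut K, γ ∈ Γ ↔ α * γ * α⁻¹ ∈ Γ) :
    ∀ n : ℤ, ∀ δ ∈ Γ, α ^ n * δ * (α ^ n)⁻¹ ∈ Γ := by
  have hback : ∀ δ ∈ Γ, α⁻¹ * δ * α ∈ Γ := by
    intro δ hδ
    apply (hconj (α⁻¹ * δ * α)).mpr
    have e : α * (α⁻¹ * δ * α) * α⁻¹ = δ := by group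
    rw [e]; exact hδ
  intro n
  induction n using Int.induction_on with
  | zero => intro δ hδ; simpa using hδ
  | succ k ih =>
      intro δ hδ
      have h1 := (hconj _).mp (ih δ hδ)
      have e : α * (α ^ (k:ℤ) * δ * (α ^ (k:ℤ))⁻¹) * α⁻¹
          = α ^ ((k:ℤ)+1) * δ * (α ^ ((k:ℤ)+1))⁻¹ := by
        rw [zpow_add, zpow_one]; group
      rwa [e] at h1
  | pred k ih =>
      intro δ hδ
      have h1 := hback _ (ih δ hδ)
      have e : α⁻¹ * (α ^ (-(k:ℤ)) * δ * (α ^ (-(k:ℤ)))⁻¹) * α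
          = α ^ (-(k:ℤ)-1) * δ * (α ^ (-(k:ℤ)-1))⁻¹ := by
        rw [sub_eq_add_neg, zpow_add, zpow_neg_one]; group
      rwa [e] at h1

/-- Every element of the join decomposes as `γ * α ^ n`. -/
lemma join_decomp (Γ : Subgroup (MulAut K)) (α : MulAut K)
    (hconj : ∀ γ : MulAut K, γ ∈ Γ ↔ α * γ * α⁻¹ ∈ Γ) :
    ∀ g ∈ Γ ⊔ Subgroup.zpowers α, ∃ γ ∈ Γ, ∃ n : ℤ, g = γ * α ^ n := by
  set P : Subgroup (MulAut K) :=
    { carrier := {g : MulAut K | ∃ γ ∈ Γ, ∃ n : ℤ, g = γ * α ^ n}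
      one_mem' := ⟨1, Γ.one_mem, 0, by simp⟩
      mul_mem' := by
        rintro g₁ g₂ ⟨γ₁, hγ₁, n₁, rfl⟩ ⟨γ₂, hγ₂, n₂, rfl⟩
        refine ⟨γ₁ * (α ^ n₁ * γ₂ * (α ^ n₁)⁻¹), Γ.mul_mem hγ₁
          (conj_zpow_mem Γ α hconj n₁ γ₂ hγ₂), n₁ + n₂, ?_⟩
        rw [zpow_add]; group
      inv_mem' := by
        rintro g ⟨γ, hγ, n, rfl⟩
        refine ⟨(α ^ n)⁻¹ * γ⁻¹ * α ^ n, ?_, -n, ?_⟩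
        · have := conj_zpow_mem Γ α hconj (-n) γ⁻¹ (Γ.inv_mem hγ)
          simpa [zpow_neg] using this
        · rw [zpow_neg]; group } with hP
  intro g hg
  have hsub : Γ ⊔ Subgroup.zpowers α ≤ P := by
    apply sup_le
    · intro γ hγ
      exact ⟨γ, hγ, 0, by simp⟩
    · intro g hg
      obtain ⟨n, rfl⟩ := hg
      exact ⟨1, Γ.one_mem, n, by simp⟩
  exact hsub hg

/-- Restriction of an automorphism to an invariant closed subgroup. -/
def restrictAut (N : Subgroup K) (e : MulAut K)
    (h1 : ∀ x ∈ N, e x ∈ N) (h2 : ∀ x ∈ N, e⁻¹ x ∈ N) : MulAut ↥N where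
  toFun x := ⟨e x, h1 x x.2⟩
  invFun x := ⟨e⁻¹ x, h2 x x.2⟩
  left_inv x := by
    ext
    show e⁻¹ (e x) = x
    simp only [← MulAut.mul_apply, inv_mul_cancel, MulAut.one_apply]
  right_inv x := by
    ext
    show e (e⁻¹ x) = x
    simp only [← MulAut.mul_apply, mul_inv_cancel, MulAut.one_apply]
  map_mul' x y := by
    ext
    show e ((x : K) * (y : K)) = e x * e y
    rw [map_mul]

@[simp] lemma restrictAut_apply (N : Subgroup K) (e : MulAut K) (h1) (h2) (x : ↥N) :
    ((restrictAut N e h1 h2 x : ↥N) : K) = e (x : K) := rfl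

@[simp] lemma restrictAut_inv_apply (N : Subgroup K) (e : MulAut K) (h1) (h2) (x : ↥N) :
    (((restrictAut N e h1 h2)⁻¹ x : ↥N) : K) = e⁻¹ (x : K) := rfl

end Instantiate

/-- Let `Γ` be a group of continuous automorphisms of a compact metrizable
group `K` and `α` a continuous automorphism of `K`.  If `Γ` acts distally on `K`, `α` is
distal on `K` and `α Γ α⁻¹ = Γ`, then the group generated by `Γ` and `α` acts distally
on `K`. -/
theorem stmt10 {K : Type*} [Group K] [TopologicalSpace K] [IsTopologicalGroup K]
    [CompactSpace K] [MetrizableSpace K]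
    (Γ : Subgroup (MulAut K)) (hcont : ∀ γ ∈ Γ, Continuous ⇑γ)
    (α : MulAut K) (hαcont : Continuous ⇑α)
    (hΓ : IsDistalAction Γ.autMaps)
    (hα : IsDistalAction (MulAut.cycMaps α))
    (hconj : ∀ γ : MulAut K, γ ∈ Γ ↔ α * γ * α⁻¹ ∈ Γ) :
    IsDistalAction (Γ ⊔ Subgroup.zpowers α).autMaps := by
  classical
  intro z hz hbad
  -- reduce the orbit set
  have horb : {y : K | ∃ f ∈ (Γ ⊔ Subgroup.zpowers α).autMaps, f z = y}
      ⊆ {y : K | ∃ γ ∈ Γ, ∃ n : ℤ, γ ((α ^ n) z) = y} := by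
    rintro y ⟨f, ⟨g, hg, rfl⟩, rfl⟩
    obtain ⟨γ, hγ, n, rfl⟩ := join_decomp Γ α hconj g hg
    exact ⟨γ, hγ, n, rfl⟩
  have hbad' : (1 : K) ∈ closure {y : K | ∃ γ ∈ Γ, ∃ n : ℤ, γ ((α ^ n) z) = y} :=
    closure_mono horb hbad
  -- the minimal invariant closed subgroup containing z
  set ℱ : Set (Subgroup K) := {N | IsClosed (N : Set K) ∧ (∀ γ ∈ Γ, ∀ x ∈ N, γ x ∈ N)
    ∧ (∀ x ∈ N, α x ∈ N) ∧ (∀ x ∈ N, α⁻¹ x ∈ N) ∧ z ∈ N} with hℱ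
  set N₀ : Subgroup K := sInf ℱ with hN₀
  have hmem : N₀ ∈ ℱ := by
    refine ⟨?_, ?_, ?_, ?_, ?_⟩
    · have : ((N₀ : Set K)) = ⋂ N ∈ ℱ, (N : Set K) := by
        rw [hN₀]; exact Subgroup.coe_sInf ℱ
      rw [this]
      exact isClosed_biInter (fun N hN => hN.1)
    · intro γ hγ x hx
      rw [hN₀, Subgroup.mem_sInf] at hx ⊢
      intro N hN
      exact hN.2.1 γ hγ x (hx N hN)
    · intro x hx
      rw [hN₀, Subgroup.mem_sInf] at hx ⊢
      intro N hN
      exact hN.2.2.1 x (hx N hN)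
    · intro x hx
      rw [hN₀, Subgroup.mem_sInf] at hx ⊢
      intro N hN
      exact hN.2.2.2.1 x (hx N hN)
    · rw [hN₀, Subgroup.mem_sInf]
      intro N hN
      exact hN.2.2.2.2
  haveI : CompactSpace ↥N₀ := isCompact_iff_compactSpace.mp hmem.1.isCompact
  haveI : MetrizableSpace ↥N₀ := by
    exact TopologicalSpace.MetrizableSpace.subtype (X := K) ((N₀ : Set K))
  -- restricted automorphisms
  set aM : MulAut ↥N₀ := restrictAut N₀ α hmem.2.2.1 hmem.2.2.2.1 with haM
  have hacM : Continuous ⇑aM := by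
    apply continuous_induced_rng.mpr
    exact hαcont.comp continuous_subtype_val
  -- zpow coherence
  have hzpow : ∀ n : ℤ, ∀ x : ↥N₀, (((aM ^ n) x : ↥N₀) : K) = (α ^ n) (x : K) := by
    intro n
    induction n using Int.induction_on with
    | zero => intro x; simp
    | succ k ih =>
        intro x
        have e1 : (aM ^ ((k:ℤ)+1)) x = (aM ^ (k:ℤ)) (aM x) := by
          rw [zpow_add, zpow_one]; rfl
        have e2 : (α ^ ((k:ℤ)+1)) (x : K) = (α ^ (k:ℤ)) (α (x : K)) := by
          rw [zpow_add, zpow_one]; rfl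
        rw [e1, e2, ih (aM x)]
        rfl
    | pred k ih =>
        intro x
        have e1 : (aM ^ (-(k:ℤ)-1)) x = (aM ^ (-(k:ℤ))) (aM⁻¹ x) := by
          rw [sub_eq_add_neg, zpow_add, zpow_neg_one]; rfl
        have e2 : (α ^ (-(k:ℤ)-1)) (x : K) = (α ^ (-(k:ℤ))) (α⁻¹ (x : K)) := by
          rw [sub_eq_add_neg, zpow_add, zpow_neg_one]; rfl
        rw [e1, e2, ih (aM⁻¹ x)]
        rfl
  -- the restricted subgroup
  set 𝒢M : Subgroup (MulAut ↥N₀) :=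
    { carrier := {β : MulAut ↥N₀ | ∃ γ ∈ Γ, ∀ x : ↥N₀, ((β x : ↥N₀) : K) = γ (x : K)}
      one_mem' := ⟨1, Γ.one_mem, fun x => rfl⟩
      mul_mem' := by
        rintro β₁ β₂ ⟨γ₁, hγ₁, hs₁⟩ ⟨γ₂, hγ₂, hs₂⟩
        refine ⟨γ₁ * γ₂, Γ.mul_mem hγ₁ hγ₂, fun x => ?_⟩
        show ((β₁ (β₂ x) : ↥N₀) : K) = γ₁ (γ₂ (x : K))
        rw [hs₁ (β₂ x), hs₂ x]
      inv_mem' := by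
        rintro β ⟨γ, hγ, hs⟩
        refine ⟨γ⁻¹, Γ.inv_mem hγ, fun x => ?_⟩
        have h1 : ((β (β⁻¹ x) : ↥N₀) : K) = γ ((β⁻¹ x : ↥N₀) : K) := hs (β⁻¹ x)
        have h2 : β (β⁻¹ x) = x := by
          simp only [← MulAut.mul_apply, mul_inv_cancel, MulAut.one_apply]
        rw [h2] at h1
        have := congrArg (⇑(γ⁻¹)) h1
        simp only [← MulAut.mul_apply, inv_mul_cancel, MulAut.one_apply] at this
        exact this.symm } with h𝒢M
  have hGcM : ∀ β ∈ 𝒢M, Continuous ⇑β := by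
    rintro β ⟨γ, hγ, hs⟩
    apply continuous_induced_rng.mpr
    have : (Subtype.val ∘ ⇑β) = fun x : ↥N₀ => γ (x : K) := funext hs
    rw [this]
    exact (hcont γ hγ).comp continuous_subtype_val
  have hnormM : ∀ β : MulAut ↥N₀, β ∈ 𝒢M ↔ aM * β * aM⁻¹ ∈ 𝒢M := by
    intro β
    constructor
    · rintro ⟨γ, hγ, hs⟩
      refine ⟨α * γ * α⁻¹, (hconj γ).mp hγ, fun x => ?_⟩
      show (((aM (β (aM⁻¹ x))) : ↥N₀) : K) = (α * γ * α⁻¹) (x : K)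
      rw [restrictAut_apply, hs (aM⁻¹ x), restrictAut_inv_apply]
      rfl
    · rintro ⟨δ, hδ, hs⟩
      have hδ' : α⁻¹ * δ * α ∈ Γ := by
        apply (hconj _).mpr
        have e : α * (α⁻¹ * δ * α) * α⁻¹ = δ := by group
        rw [e]; exact hδ
      refine ⟨α⁻¹ * δ * α, hδ', fun x => ?_⟩
      have e : β = aM⁻¹ * (aM * β * aM⁻¹) * aM := by group
      rw [e]
      show (((aM⁻¹ ((aM * β * aM⁻¹) (aM x))) : ↥N₀) : K) = (α⁻¹ * δ * α) (x : K)
      rw [restrictAut_inv_apply, hs (aM x), restrictAut_apply]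
      rfl
  have hadM : ∀ x : ↥N₀, x ≠ 1 → (1 : ↥N₀) ∉ closure (aOrbit aM x) := by
    intro x hx hmem1
    have hxK : (x : K) ≠ 1 := by
      intro h
      exact hx (Subtype.ext h)
    have h1 : ((1 : ↥N₀) : K) ∈
        closure {y : K | ∃ f ∈ MulAut.cycMaps α, f (x : K) = y} := by
      apply map_mem_closure continuous_subtype_val hmem1
      rintro u ⟨n, rfl⟩
      exact ⟨⇑(α ^ n), ⟨n, rfl⟩, (hzpow n x).symm ▸ rfl⟩
    exact hα (x : K) hxK h1
  -- the bad point in the subgroup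
  set z' : ↥N₀ := ⟨z, hmem.2.2.2.2⟩ with hz'
  have hbadM : (1 : ↥N₀) ∈ closure (jOrbit 𝒢M aM z') := by
    rw [closure_subtype]
    have hsub : {y : K | ∃ γ ∈ Γ, ∃ n : ℤ, γ ((α ^ n) z) = y}
        ⊆ Subtype.val '' (jOrbit 𝒢M aM z') := by
      rintro y ⟨γ, hγ, n, rfl⟩
      set γM : MulAut ↥N₀ := restrictAut N₀ γ (hmem.2.1 γ hγ)
        (fun x hx => hmem.2.1 γ⁻¹ (Γ.inv_mem hγ) x hx) with hγM
      refine ⟨γM ((aM ^ n) z'), ⟨γM, ⟨γ, hγ, fun x => rfl⟩, n, rfl⟩, ?_⟩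
      show (((γM ((aM ^ n) z')) : ↥N₀) : K) = γ ((α ^ n) z)
      rw [restrictAut_apply, hzpow n z']
    exact closure_mono hsub hbad'
  -- descent
  have hzH : z' ∈ HH 𝒢M := descent 𝒢M aM hGcM hacM hadM hnormM hbadM
  -- HH as a subgroup of K
  set HK : Subgroup K :=
    { carrier := Subtype.val '' (HH 𝒢M)
      one_mem' := ⟨1, HH_one 𝒢M, rfl⟩
      mul_mem' := by
        rintro x y ⟨x', hx', rfl⟩ ⟨y', hy', rfl⟩
        exact ⟨x' * y', HH_mul 𝒢M hx' hy', rfl⟩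
      inv_mem' := by
        rintro x ⟨x', hx', rfl⟩
        exact ⟨x'⁻¹, HH_inv 𝒢M hx', rfl⟩ } with hHK
  have hHKmem : HK ∈ ℱ := by
    refine ⟨?_, ?_, ?_, ?_, ?_⟩
    · exact (((HH_isClosed 𝒢M hGcM).isCompact).image continuous_subtype_val).isClosed
    · rintro γ hγ x ⟨x', hx', rfl⟩
      set γM : MulAut ↥N₀ := restrictAut N₀ γ (hmem.2.1 γ hγ)
        (fun u hu => hmem.2.1 γ⁻¹ (Γ.inv_mem hγ) u hu) with hγM
      exact ⟨γM x', HH_gamma_inv 𝒢M ⟨γ, hγ, fun u => rfl⟩ hx', rfl⟩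
    · rintro x ⟨x', hx', rfl⟩
      exact ⟨aM x', HH_a_inv 𝒢M aM hnormM hacM hx', rfl⟩
    · rintro x ⟨x', hx', rfl⟩
      exact ⟨aM⁻¹ x', HH_a_inv' 𝒢M aM hnormM hacM hx', rfl⟩
    · exact ⟨z', hzH, rfl⟩
  have hle : N₀ ≤ HK := sInf_le hHKmem
  have hfull : ∀ x : ↥N₀, x ∈ HH 𝒢M := by
    intro x
    obtain ⟨y, hy, hyx⟩ := hle x.2
    rwa [← Subtype.coe_injective hyx]
  have hconstM : ∀ h ∈ CC 𝒢M, ∀ x : ↥N₀, h x = h 1 := by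
    intro h hh x
    have := (hfull x) h hh 1 𝒢M.one_mem 1
    simpa using this
  have hz'ne : z' ≠ 1 := by
    intro h
    apply hz
    have := congrArg (Subtype.val) h
    exact this
  obtain ⟨x, hxne, hxcl⟩ := lemmaC 𝒢M hGcM hconstM hz'ne
  -- contradiction with distality of Γ
  have hxKne : (x : K) ≠ 1 := fun h => hxne (Subtype.ext h)
  apply hΓ (x : K) hxKne
  apply map_mem_closure continuous_subtype_val hxcl
  rintro u ⟨β, hβ, rfl⟩
  obtain ⟨γ, hγ, hs⟩ := hβ
  exact ⟨⇑γ, ⟨γ, hγ, rfl⟩, (hs x).symm⟩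
end
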